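/- arXiv:1209.0540 — 5 statements merged into one kernel-verified Lean document; each statement's English description precedes it below -/
import Mathlib

section
/- Let A → B → C → ΣA and A' → B' → C' → ΣA' be two exact triangles in a triangulated category C that are homotopy equivalent, i.e., they induce presentations of the same functor F : C^op → Ab (meaning there exist exact sequences Hom(−,B) → Hom(−,C) → F → 0 and Hom(−,B') → Hom(−,C') → F → 0). Then A ⊕ B' ⊕ C ≅ A' ⊕ B ⊕ C'. -/
open CategoryTheory CategoryTheory.Limits CategoryTheory.Pretriangulated Opposite

universe v u


section Matrix3
variable {C : Type u} [Category.{v} C] [Preadditive C] [HasBinaryBiproducts C]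

noncomputable def map3 {X₁ X₂ X₃ Y₁ Y₂ Y₃ : C}
    (m₁₁ : X₁ ⟶ Y₁) (m₁₂ : X₁ ⟶ Y₂) (m₁₃ : X₁ ⟶ Y₃)
    (m₂₁ : X₂ ⟶ Y₁) (m₂₂ : X₂ ⟶ Y₂) (m₂₃ : X₂ ⟶ Y₃)
    (m₃₁ : X₃ ⟶ Y₁) (m₃₂ : X₃ ⟶ Y₂) (m₃₃ : X₃ ⟶ Y₃) :
    X₁ ⊞ X₂ ⊞ X₃ ⟶ Y₁ ⊞ Y₂ ⊞ Y₃ :=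
  biprod.desc (biprod.lift m₁₁ (biprod.lift m₁₂ m₁₃))
    (biprod.desc (biprod.lift m₂₁ (biprod.lift m₂₂ m₂₃))
      (biprod.lift m₃₁ (biprod.lift m₃₂ m₃₃)))

lemma map3_comp {X₁ X₂ X₃ Y₁ Y₂ Y₃ Z₁ Z₂ Z₃ : C}
    (m₁₁ : X₁ ⟶ Y₁) (m₁₂ : X₁ ⟶ Y₂) (m₁₃ : X₁ ⟶ Y₃)
    (m₂₁ : X₂ ⟶ Y₁) (m₂₂ : X₂ ⟶ Y₂) (m₂₃ : X₂ ⟶ Y₃)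
    (m₃₁ : X₃ ⟶ Y₁) (m₃₂ : X₃ ⟶ Y₂) (m₃₃ : X₃ ⟶ Y₃)
    (n₁₁ : Y₁ ⟶ Z₁) (n₁₂ : Y₁ ⟶ Z₂) (n₁₃ : Y₁ ⟶ Z₃)
    (n₂₁ : Y₂ ⟶ Z₁) (n₂₂ : Y₂ ⟶ Z₂) (n₂₃ : Y₂ ⟶ Z₃)
    (n₃₁ : Y₃ ⟶ Z₁) (n₃₂ : Y₃ ⟶ Z₂) (n₃₃ : Y₃ ⟶ Z₃) :
    map3 m₁₁ m₁₂ m₁₃ m₂₁ m₂₂ m₂₃ m₃₁ m₃₂ m₃₃ ≫ map3 n₁₁ n₁₂ n₁₃ n₂₁ n₂₂ n₂₃ n₃₁ n₃₂ n₃₃ =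
    map3 (m₁₁ ≫ n₁₁ + m₁₂ ≫ n₂₁ + m₁₃ ≫ n₃₁) (m₁₁ ≫ n₁₂ + m₁₂ ≫ n₂₂ + m₁₃ ≫ n₃₂)
      (m₁₁ ≫ n₁₃ + m₁₂ ≫ n₂₃ + m₁₃ ≫ n₃₃)
      (m₂₁ ≫ n₁₁ + m₂₂ ≫ n₂₁ + m₂₃ ≫ n₃₁) (m₂₁ ≫ n₁₂ + m₂₂ ≫ n₂₂ + m₂₃ ≫ n₃₂)
      (m₂₁ ≫ n₁₃ + m₂₂ ≫ n₂₃ + m₂₃ ≫ n₃₃)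
      (m₃₁ ≫ n₁₁ + m₃₂ ≫ n₂₁ + m₃₃ ≫ n₃₁) (m₃₁ ≫ n₁₂ + m₃₂ ≫ n₂₂ + m₃₃ ≫ n₃₂)
      (m₃₁ ≫ n₁₃ + m₃₂ ≫ n₂₃ + m₃₃ ≫ n₃₃) := by
  apply biprod.hom_ext' <;> [skip; apply biprod.hom_ext'] <;>
  · apply biprod.hom_ext <;> [skip; apply biprod.hom_ext] <;>
      simp [map3, add_assoc]

lemma map3_id {X₁ X₂ X₃ : C} :
    map3 (𝟙 X₁) 0 0 0 (𝟙 X₂) 0 0 0 (𝟙 X₃) = 𝟙 (X₁ ⊞ X₂ ⊞ X₃) := by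
  apply biprod.hom_ext' <;> [skip; apply biprod.hom_ext'] <;>
  · apply biprod.hom_ext <;> [skip; apply biprod.hom_ext] <;> simp [map3]

lemma map3_congr {X₁ X₂ X₃ Y₁ Y₂ Y₃ : C}
    {m₁₁ n₁₁ : X₁ ⟶ Y₁} {m₁₂ n₁₂ : X₁ ⟶ Y₂} {m₁₃ n₁₃ : X₁ ⟶ Y₃}
    {m₂₁ n₂₁ : X₂ ⟶ Y₁} {m₂₂ n₂₂ : X₂ ⟶ Y₂} {m₂₃ n₂₃ : X₂ ⟶ Y₃}
    {m₃₁ n₃₁ : X₃ ⟶ Y₁} {m₃₂ n₃₂ : X₃ ⟶ Y₂} {m₃₃ n₃₃ : X₃ ⟶ Y₃}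
    (h₁₁ : m₁₁ = n₁₁) (h₁₂ : m₁₂ = n₁₂) (h₁₃ : m₁₃ = n₁₃)
    (h₂₁ : m₂₁ = n₂₁) (h₂₂ : m₂₂ = n₂₂) (h₂₃ : m₂₃ = n₂₃)
    (h₃₁ : m₃₁ = n₃₁) (h₃₂ : m₃₂ = n₃₂) (h₃₃ : m₃₃ = n₃₃) :
    map3 m₁₁ m₁₂ m₁₃ m₂₁ m₂₂ m₂₃ m₃₁ m₃₂ m₃₃ =
      map3 n₁₁ n₁₂ n₁₃ n₂₁ n₂₂ n₂₃ n₃₁ n₃₂ n₃₃ := by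
  subst h₁₁ h₁₂ h₁₃ h₂₁ h₂₂ h₂₃ h₃₁ h₃₂ h₃₃; rfl

lemma isIso_map3_lower {X₁ X₂ X₃ : C} (δ : X₂ ⟶ X₂) (hδ : δ ≫ δ = 0)
    (l₁ : X₂ ⟶ X₁) (l₂ : X₃ ⟶ X₁) (l₃ : X₃ ⟶ X₂) :
    IsIso (map3 (𝟙 X₁) 0 0 l₁ (𝟙 X₂ + δ) 0 l₂ l₃ (𝟙 X₃)) := by
  refine ⟨map3 (𝟙 X₁) 0 0 (-l₁ + δ ≫ l₁) (𝟙 X₂ - δ) 0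
      (-l₂ + l₃ ≫ l₁ - l₃ ≫ δ ≫ l₁) (-l₃ + l₃ ≫ δ) (𝟙 X₃), ?_, ?_⟩ <;>
    refine Eq.trans (map3_comp _ _ _ _ _ _ _ _ _ _ _ _ _ _ _ _ _ _) (Eq.trans
      (map3_congr ?_ ?_ ?_ ?_ ?_ ?_ ?_ ?_ ?_) map3_id) <;>
    simp [Preadditive.comp_add, Preadditive.add_comp, Preadditive.comp_sub, Preadditive.sub_comp, hδ, reassoc_of% hδ] <;>
    abel

end Matrix3

section Coker
variable {C : Type u} [Category.{v} C] [Preadditive C]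

lemma yoneda_app_map {Y X X' : C} (y : X' ⟶ X) (x : X ⟶ Y) :
    ((preadditiveYoneda.obj Y).map y.op) x = y ≫ x := rfl

lemma coker_factor {B Y : C} (g : B ⟶ Y) {X : C} (x : X ⟶ Y)
    (hx : (cokernel.π (preadditiveYoneda.map g)).app (op X) x = 0) :
    ∃ s : X ⟶ B, s ≫ g = x := by
  let S := ShortComplex.mk (preadditiveYoneda.map g) (cokernel.π _) (cokernel.condition _)
  have hS : S.Exact := S.exact_of_g_is_cokernel (cokernelIsCokernel _)
  have hSX : (S.map ((evaluation Cᵒᵖ AddCommGrpCat.{v}).obj (op X))).Exact := hS.map _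
  obtain ⟨s, hs⟩ := (ShortComplex.ab_exact_iff _).1 hSX x hx
  exact ⟨s, hs⟩

lemma coker_surj {B Y : C} (g : B ⟶ Y) {X : C}
    (t : (cokernel (preadditiveYoneda.map g)).obj (op X)) :
    ∃ x : X ⟶ Y, (cokernel.π (preadditiveYoneda.map g)).app (op X) x = t := by
  have : Epi ((cokernel.π (preadditiveYoneda.map g)).app (op X)) := inferInstance
  exact (AddCommGrpCat.epi_iff_surjective _).1 this t
end Coker

section Coker
variable {C : Type u} [Category.{v} C] [Preadditive C]

lemma nat_apply {F F' : Cᵒᵖ ⥤ AddCommGrpCat.{v}} (β : F ⟶ F') {X X' : Cᵒᵖ} (y : X ⟶ X')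
    (t : F.obj X) : β.app X' (F.map y t) = F'.map y (β.app X t) := by
  have h := ConcreteCategory.congr_hom (β.naturality y) t
  rw [CategoryTheory.comp_apply, CategoryTheory.comp_apply] at h
  exact h

lemma coker_π_nat {B Y : C} (g : B ⟶ Y) {X X' : C} (y : X' ⟶ X) (x : X ⟶ Y) :
    (cokernel.π (preadditiveYoneda.map g)).app (op X') (y ≫ x)
      = (cokernel (preadditiveYoneda.map g)).map y.op
        ((cokernel.π (preadditiveYoneda.map g)).app (op X) x) := by
  have h : ((preadditiveYoneda.obj Y).map y.op) x = y ≫ x := rfl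
  rw [← h]
  exact nat_apply (cokernel.π (preadditiveYoneda.map g)) y.op x

lemma coker_π_comp_zero {B Y : C} (g : B ⟶ Y) {X : C} (s : X ⟶ B) :
    (cokernel.π (preadditiveYoneda.map g)).app (op X) (s ≫ g) = 0 := by
  have h : (preadditiveYoneda.map g ≫ cokernel.π (preadditiveYoneda.map g)).app (op X) s = 0 := by
    rw [cokernel.condition]; rfl
  have h2 : ((preadditiveYoneda.map g).app (op X)) s = s ≫ g := rfl
  erw [NatTrans.comp_app, CategoryTheory.comp_apply, h2] at h
  exact h
end Coker
/-- (Schanuel's lemma for triangulated categories.)  Two exact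
triangles `A → B → C → ΣA` and `A' → B' → C' → ΣA'` in a triangulated category
are homotopy equivalent if they induce presentations of the same (i.e. isomorphic)
functor `F : Cᵒᵖ ⥤ Ab`, that is, the cokernels of `Hom(−,B) → Hom(−,C)` and of
`Hom(−,B') → Hom(−,C')` are isomorphic.  In that case
`A ⊕ B' ⊕ C ≅ A' ⊕ B ⊕ C'`. -/
theorem schanuel_for_triangulated_categories
    {C : Type u} [Category.{v} C] [HasZeroObject C] [HasShift C ℤ] [Preadditive C]
    [∀ n : ℤ, (CategoryTheory.shiftFunctor C n).Additive] [Pretriangulated C]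
    [HasBinaryBiproducts C]
    (T T' : Triangle C) (hT : T ∈ distTriang C) (hT' : T' ∈ distTriang C)
    (h : Nonempty (cokernel (preadditiveYoneda.map T.mor₂) ≅
      cokernel (preadditiveYoneda.map T'.mor₂))) :
    Nonempty (T.obj₁ ⊞ T'.obj₂ ⊞ T.obj₃ ≅ T'.obj₁ ⊞ T.obj₂ ⊞ T'.obj₃) := by
  obtain ⟨α⟩ := h
  -- the comparison maps u, v
  obtain ⟨u, hu0⟩ := coker_surj T'.mor₂ (α.hom.app (op T.obj₃)
    ((cokernel.π (preadditiveYoneda.map T.mor₂)).app (op T.obj₃) (𝟙 T.obj₃)))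
  obtain ⟨v, hv0⟩ := coker_surj T.mor₂ (α.inv.app (op T'.obj₃)
    ((cokernel.π (preadditiveYoneda.map T'.mor₂)).app (op T'.obj₃) (𝟙 T'.obj₃)))
  have hu : ∀ {X : C} (x : X ⟶ T.obj₃),
      (cokernel.π (preadditiveYoneda.map T'.mor₂)).app (op X) (x ≫ u)
        = α.hom.app (op X) ((cokernel.π (preadditiveYoneda.map T.mor₂)).app (op X) x) := by
    intro X x
    rw [coker_π_nat T'.mor₂ x u, hu0, ← nat_apply α.hom x.op, ← coker_π_nat T.mor₂ x (𝟙 T.obj₃),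
      Category.comp_id]
  have hv : ∀ {X : C} (x : X ⟶ T'.obj₃),
      (cokernel.π (preadditiveYoneda.map T.mor₂)).app (op X) (x ≫ v)
        = α.inv.app (op X) ((cokernel.π (preadditiveYoneda.map T'.mor₂)).app (op X) x) := by
    intro X x
    rw [coker_π_nat T.mor₂ x v, hv0, ← nat_apply α.inv x.op, ← coker_π_nat T'.mor₂ x (𝟙 T'.obj₃),
      Category.comp_id]
  -- the homotopies w, w'
  obtain ⟨w, hw⟩ := coker_factor T.mor₂ (u ≫ v - 𝟙 T.obj₃) (by
    erw [map_sub, hv u, hu0]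
    have h1 := ConcreteCategory.congr_hom (α.hom_inv_id_app (op T.obj₃))
      ((cokernel.π (preadditiveYoneda.map T.mor₂)).app (op T.obj₃) (𝟙 T.obj₃))
    rw [CategoryTheory.comp_apply] at h1
    rw [h1, CategoryTheory.id_apply, sub_self])
  obtain ⟨w', hw'⟩ := coker_factor T'.mor₂ (v ≫ u - 𝟙 T'.obj₃) (by
    erw [map_sub, hu v]
    have h0 : (cokernel.π (preadditiveYoneda.map T.mor₂)).app (op T'.obj₃) v
        = α.inv.app (op T'.obj₃)
          ((cokernel.π (preadditiveYoneda.map T'.mor₂)).app (op T'.obj₃) (𝟙 T'.obj₃)) := by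
      rw [← hv (𝟙 T'.obj₃), Category.id_comp]
    rw [h0]
    have h1 := ConcreteCategory.congr_hom (α.inv_hom_id_app (op T'.obj₃))
      ((cokernel.π (preadditiveYoneda.map T'.mor₂)).app (op T'.obj₃) (𝟙 T'.obj₃))
    rw [CategoryTheory.comp_apply] at h1
    rw [h1, CategoryTheory.id_apply, sub_self])
  -- the middle comparison maps b, b'
  obtain ⟨b, hb⟩ := coker_factor T'.mor₂ (T.mor₂ ≫ u) (by
    rw [hu T.mor₂]
    have h0 : (cokernel.π (preadditiveYoneda.map T.mor₂)).app (op T.obj₂) T.mor₂ = 0 := by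
      have := coker_π_comp_zero T.mor₂ (𝟙 T.obj₂)
      rwa [Category.id_comp] at this
    rw [h0, map_zero])
  obtain ⟨b', hb'⟩ := coker_factor T.mor₂ (T'.mor₂ ≫ v) (by
    rw [hv T'.mor₂]
    have h0 : (cokernel.π (preadditiveYoneda.map T'.mor₂)).app (op T'.obj₂) T'.mor₂ = 0 := by
      have := coker_π_comp_zero T'.mor₂ (𝟙 T'.obj₂)
      rwa [Category.id_comp] at this
    rw [h0, map_zero])
  -- complete to morphisms of triangles
  obtain ⟨a, ha₁, ha₂⟩ := complete_distinguished_triangle_morphism₁ T T' hT hT' b u hb.symm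
  obtain ⟨a', ha₁', ha₂'⟩ := complete_distinguished_triangle_morphism₁ T' T hT' hT b' v hb'.symm
  -- the homotopy at the second object
  have he0 : (b ≫ b' - 𝟙 T.obj₂ - T.mor₂ ≫ w) ≫ T.mor₂ = 0 := by
    rw [Preadditive.sub_comp, Preadditive.sub_comp, Category.assoc, hb', ← Category.assoc, hb,
      Category.assoc, Category.assoc, hw, Category.id_comp, Preadditive.comp_sub,
      Category.comp_id]
    abel
  obtain ⟨e, he⟩ := Triangle.coyoneda_exact₂ T hT _ he0
  have he0' : (b' ≫ b - 𝟙 T'.obj₂ - T'.mor₂ ≫ w') ≫ T'.mor₂ = 0 := by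
    rw [Preadditive.sub_comp, Preadditive.sub_comp, Category.assoc, hb, ← Category.assoc, hb',
      Category.assoc, Category.assoc, hw', Category.id_comp, Preadditive.comp_sub,
      Category.comp_id]
    abel
  obtain ⟨e', he'⟩ := Triangle.coyoneda_exact₂ T' hT' _ he0'
  -- homotopy at first object, derived from the third-square compatibilities
  have hu3 : T.mor₃ ≫ ((a ≫ a')⟦(1:ℤ)⟧' - 𝟙 (T.obj₁⟦(1:ℤ)⟧)) = 0 := by
    have huv : u ≫ v = 𝟙 T.obj₃ + w ≫ T.mor₂ := by rw [hw]; abel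
    rw [Preadditive.comp_sub, Category.comp_id, Functor.map_comp, ← Category.assoc, ha₂,
      Category.assoc, ha₂', ← Category.assoc, huv, Preadditive.add_comp, Category.id_comp,
      Category.assoc, comp_distTriang_mor_zero₂₃ T hT, comp_zero, add_zero, sub_self]
  obtain ⟨ψ, hψ⟩ : ∃ ψ : T.obj₂⟦(1:ℤ)⟧ ⟶ T.obj₁⟦(1:ℤ)⟧, (a ≫ a')⟦(1:ℤ)⟧' - 𝟙 (T.obj₁⟦(1:ℤ)⟧) = (-(T.mor₁⟦(1:ℤ)⟧')) ≫ ψ := Triangle.yoneda_exact₃ _ (rot_of_distTriang _ hT) _ hu3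
  have hr5 : a ≫ a' = 𝟙 T.obj₁ + T.mor₁ ≫ (shiftFunctor C (1:ℤ)).preimage (-ψ) := by
    apply (shiftFunctor C (1:ℤ)).map_injective
    rw [sub_eq_iff_eq_add] at hψ
    rw [hψ]
    simp only [Functor.map_add, Functor.map_comp, Functor.map_preimage, Functor.map_id]
    simp only [Preadditive.neg_comp, Preadditive.comp_neg]
    rw [CategoryTheory.Functor.map_id]
    abel
  set ee : T.obj₂ ⟶ T.obj₁ := (shiftFunctor C (1:ℤ)).preimage (-ψ) with hee
  have hu3' : T'.mor₃ ≫ ((a' ≫ a)⟦(1:ℤ)⟧' - 𝟙 (T'.obj₁⟦(1:ℤ)⟧)) = 0 := by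
    have hvu : v ≫ u = 𝟙 T'.obj₃ + w' ≫ T'.mor₂ := by rw [hw']; abel
    rw [Preadditive.comp_sub, Category.comp_id, Functor.map_comp, ← Category.assoc, ha₂',
      Category.assoc, ha₂, ← Category.assoc, hvu, Preadditive.add_comp, Category.id_comp,
      Category.assoc, comp_distTriang_mor_zero₂₃ T' hT', comp_zero, add_zero, sub_self]
  obtain ⟨ψ', hψ'⟩ : ∃ ψ : T'.obj₂⟦(1:ℤ)⟧ ⟶ T'.obj₁⟦(1:ℤ)⟧, (a' ≫ a)⟦(1:ℤ)⟧' - 𝟙 (T'.obj₁⟦(1:ℤ)⟧) = (-(T'.mor₁⟦(1:ℤ)⟧')) ≫ ψ := Triangle.yoneda_exact₃ _ (rot_of_distTriang _ hT') _ hu3'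
  have hr5' : a' ≫ a = 𝟙 T'.obj₁ + T'.mor₁ ≫ (shiftFunctor C (1:ℤ)).preimage (-ψ') := by
    apply (shiftFunctor C (1:ℤ)).map_injective
    rw [sub_eq_iff_eq_add] at hψ'
    rw [hψ']
    simp only [Functor.map_add, Functor.map_comp, Functor.map_preimage, Functor.map_id]
    simp only [Preadditive.neg_comp, Preadditive.comp_neg]
    rw [CategoryTheory.Functor.map_id]
    abel
  set ee' : T'.obj₂ ⟶ T'.obj₁ := (shiftFunctor C (1:ℤ)).preimage (-ψ') with hee'
  -- the square-zero correction terms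
  have h7 : T.mor₁ ≫ e ≫ T.mor₁ = T.mor₁ ≫ ee ≫ T.mor₁ := by
    calc T.mor₁ ≫ e ≫ T.mor₁
        = T.mor₁ ≫ (b ≫ b' - 𝟙 T.obj₂ - T.mor₂ ≫ w) := by rw [he]
      _ = (T.mor₁ ≫ b) ≫ b' - T.mor₁ - (T.mor₁ ≫ T.mor₂) ≫ w := by
          simp only [Preadditive.comp_sub, Category.comp_id, Category.assoc]
      _ = (a ≫ T'.mor₁) ≫ b' - T.mor₁ - 0 := by
          rw [ha₁, comp_distTriang_mor_zero₁₂ T hT, zero_comp]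
      _ = a ≫ (a' ≫ T.mor₁) - T.mor₁ := by rw [Category.assoc, ha₁', sub_zero]
      _ = (a ≫ a') ≫ T.mor₁ - T.mor₁ := by rw [Category.assoc]
      _ = T.mor₁ ≫ ee ≫ T.mor₁ := by
          rw [hr5]; simp only [Preadditive.add_comp, Category.id_comp, Category.assoc]; abel
  have h7' : T'.mor₁ ≫ e' ≫ T'.mor₁ = T'.mor₁ ≫ ee' ≫ T'.mor₁ := by
    calc T'.mor₁ ≫ e' ≫ T'.mor₁
        = T'.mor₁ ≫ (b' ≫ b - 𝟙 T'.obj₂ - T'.mor₂ ≫ w') := by rw [he']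
      _ = (T'.mor₁ ≫ b') ≫ b - T'.mor₁ - (T'.mor₁ ≫ T'.mor₂) ≫ w' := by
          simp only [Preadditive.comp_sub, Category.comp_id, Category.assoc]
      _ = (a' ≫ T.mor₁) ≫ b - T'.mor₁ - 0 := by
          rw [ha₁', comp_distTriang_mor_zero₁₂ T' hT', zero_comp]
      _ = a' ≫ (a ≫ T'.mor₁) - T'.mor₁ := by rw [Category.assoc, ha₁, sub_zero]
      _ = (a' ≫ a) ≫ T'.mor₁ - T'.mor₁ := by rw [Category.assoc]
      _ = T'.mor₁ ≫ ee' ≫ T'.mor₁ := by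
          rw [hr5']; simp only [Preadditive.add_comp, Category.id_comp, Category.assoc]; abel
  have hδ : (e ≫ T.mor₁ - ee ≫ T.mor₁) ≫ (e ≫ T.mor₁ - ee ≫ T.mor₁) = 0 := by
    simp only [Preadditive.sub_comp, Preadditive.comp_sub, Category.assoc, h7]
    abel
  have hδ' : (e' ≫ T'.mor₁ - ee' ≫ T'.mor₁) ≫ (e' ≫ T'.mor₁ - ee' ≫ T'.mor₁) = 0 := by
    simp only [Preadditive.sub_comp, Preadditive.comp_sub, Category.assoc, h7']
    abel
  -- the mutually inverse (up to lower triangular automorphisms) matrices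
  set MM := map3 a (-T.mor₁) (0 : T.obj₁ ⟶ T'.obj₃) (-ee') b' T'.mor₂
    (0 : T.obj₃ ⟶ T'.obj₁) w u with hMM
  set NN := map3 a' T'.mor₁ (0 : T'.obj₁ ⟶ T.obj₃) ee b (-T.mor₂)
    (0 : T'.obj₃ ⟶ T.obj₁) (-w') v with hNN
  have hbb : b ≫ b' = e ≫ T.mor₁ + 𝟙 T.obj₂ + T.mor₂ ≫ w := by rw [← he]; abel
  have hbb' : b' ≫ b = e' ≫ T'.mor₁ + 𝟙 T'.obj₂ + T'.mor₂ ≫ w' := by rw [← he']; abel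
  have hP : MM ≫ NN = map3 (𝟙 T.obj₁) 0 0
      ((-ee') ≫ a' + b' ≫ ee + T'.mor₂ ≫ 0)
      (𝟙 T'.obj₂ + (e' ≫ T'.mor₁ - ee' ≫ T'.mor₁)) 0
      (0 ≫ a' + w ≫ ee + u ≫ 0) (0 ≫ T'.mor₁ + w ≫ b + u ≫ (-w')) (𝟙 T.obj₃) := by
    rw [hMM, hNN]
    refine (map3_comp _ _ _ _ _ _ _ _ _ _ _ _ _ _ _ _ _ _).trans
      (map3_congr ?_ ?_ ?_ rfl ?_ ?_ rfl rfl ?_)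
    · rw [hr5]
      simp only [Preadditive.neg_comp, zero_comp, comp_zero]
      abel
    · simp only [Preadditive.neg_comp, zero_comp, comp_zero]
      rw [← ha₁]
      abel
    · simp only [comp_zero, Preadditive.neg_comp, Preadditive.comp_neg,
        comp_distTriang_mor_zero₁₂ T hT, zero_comp, neg_zero, add_zero, zero_add]
    · rw [hbb']
      simp only [Preadditive.neg_comp, Preadditive.comp_neg]
      abel
    · simp only [comp_zero, Preadditive.comp_neg, hb', zero_add]
      abel
    · simp only [zero_comp, Preadditive.comp_neg, hw, Category.id_comp, zero_add]
      abel
  have hQ : NN ≫ MM = map3 (𝟙 T'.obj₁) 0 0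
      (ee ≫ a + b ≫ (-ee') + (-T.mor₂) ≫ 0)
      (𝟙 T.obj₂ + (e ≫ T.mor₁ - ee ≫ T.mor₁)) 0
      (0 ≫ a + (-w') ≫ (-ee') + v ≫ 0) (0 ≫ (-T.mor₁) + (-w') ≫ b' + v ≫ w) (𝟙 T'.obj₃) := by
    rw [hMM, hNN]
    refine (map3_comp _ _ _ _ _ _ _ _ _ _ _ _ _ _ _ _ _ _).trans
      (map3_congr ?_ ?_ ?_ rfl ?_ ?_ rfl rfl ?_)
    · rw [hr5']
      simp only [Preadditive.neg_comp, Preadditive.comp_neg, zero_comp, comp_zero]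
      abel
    · simp only [Preadditive.neg_comp, Preadditive.comp_neg, zero_comp, comp_zero]
      rw [← ha₁']
      abel
    · simp only [comp_zero, comp_distTriang_mor_zero₁₂ T' hT', zero_comp, add_zero, zero_add]
    · rw [hbb]
      simp only [Preadditive.neg_comp, Preadditive.comp_neg]
      abel
    · simp only [comp_zero, Preadditive.neg_comp, hb, zero_add]
      abel
    · simp only [zero_comp, Preadditive.neg_comp, hw', Category.id_comp, zero_add]
      abel
  have hPiso : IsIso (MM ≫ NN) := by rw [hP]; exact isIso_map3_lower _ hδ' _ _ _
  have hQiso : IsIso (NN ≫ MM) := by rw [hQ]; exact isIso_map3_lower _ hδ _ _ _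
  have h1 : MM ≫ (NN ≫ inv (MM ≫ NN)) = 𝟙 _ := by
    rw [← Category.assoc]; exact IsIso.hom_inv_id _
  have h2 : (inv (NN ≫ MM) ≫ NN) ≫ MM = 𝟙 _ := by
    rw [Category.assoc]; exact IsIso.inv_hom_id _
  have heq : NN ≫ inv (MM ≫ NN) = inv (NN ≫ MM) ≫ NN := by
    calc NN ≫ inv (MM ≫ NN)
        = ((inv (NN ≫ MM) ≫ NN) ≫ MM) ≫ (NN ≫ inv (MM ≫ NN)) := by
          rw [h2, Category.id_comp]
      _ = (inv (NN ≫ MM) ≫ NN) ≫ ((MM ≫ NN) ≫ inv (MM ≫ NN)) := by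
          simp only [Category.assoc]
      _ = inv (NN ≫ MM) ≫ NN := by rw [IsIso.hom_inv_id, Category.comp_id]
  have : IsIso MM := ⟨⟨NN ≫ inv (MM ≫ NN), h1, by rw [heq]; exact h2⟩⟩
  exact ⟨asIso MM⟩
end

section
/- Let A be an abelian category and χ : Ob A → ℕ an additive function. Then every object of the quotient abelian category A/S_χ (where S_χ is the Serre subcategory of objects with χ(X) = 0) has finite length; in fact the length of the image of X in A/S_χ is at most χ(X). -/
open CategoryTheory CategoryTheory.Limits

universe v u v' u'

/-- A function on the objects of an abelian category is *additive* if it is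
additive on short exact sequences. -/
def IsAdditiveFn {A : Type u} [Category.{v} A] [Abelian A] (χ : A → ℕ) : Prop :=
  ∀ S : ShortComplex A, S.ShortExact → χ S.X₂ = χ S.X₁ + χ S.X₃

/-- The class of morphisms inverted in the Gabriel quotient `A ⧸ S_χ`, where
`S_χ` is the Serre subcategory of objects with `χ X = 0`: those morphisms whose
kernel and cokernel belong to `S_χ`. -/
noncomputable def serreW {A : Type u} [Category.{v} A] [Abelian A] (χ : A → ℕ) :
    MorphismProperty A :=
  fun _ _ f => χ (kernel f) = 0 ∧ χ (cokernel f) = 0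

namespace SerreAux

variable {A : Type u} [Category.{v} A] [Abelian A] {χ : A → ℕ} (hχ : IsAdditiveFn χ)

include hχ

lemma chi_epi {X Y : A} (f : X ⟶ Y) [Epi f] : χ X = χ (kernel f) + χ Y :=
  hχ (ShortComplex.mk (kernel.ι f) f (by simp))
    (ShortComplex.ShortExact.mk' (ShortComplex.exact_kernel f) inferInstance inferInstance)

lemma chi_mono {X Y : A} (f : X ⟶ Y) [Mono f] : χ Y = χ X + χ (cokernel f) :=
  hχ (ShortComplex.mk f (cokernel.π f) (by simp))
    (ShortComplex.ShortExact.mk' (ShortComplex.exact_cokernel f) inferInstance inferInstance)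

lemma chi_isZero {Z : A} (hZ : IsZero Z) : χ Z = 0 := by
  have h : χ Z = χ Z + χ Z :=
    hχ (ShortComplex.mk (𝟙 Z) (𝟙 Z) (hZ.eq_of_src _ _))
      (ShortComplex.ShortExact.mk' (ShortComplex.exact_of_isZero_X₂ _ hZ)
        inferInstance inferInstance)
  omega

lemma chi_iso {X Y : A} (e : X ≅ Y) : χ X = χ Y := by
  have h := chi_mono hχ e.hom
  have hz : χ (cokernel e.hom) = 0 :=
    chi_isZero hχ ((isZero_zero A).of_iso (cokernel.ofEpi e.hom))
  omega

lemma chi_mono_le {X Y : A} (f : X ⟶ Y) [Mono f] : χ X ≤ χ Y := by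
  have := chi_mono hχ f; omega

lemma chi_epi_le {X Y : A} (f : X ⟶ Y) [Epi f] : χ Y ≤ χ X := by
  have := chi_epi hχ f; omega

lemma chi_src {X Y : A} (f : X ⟶ Y) : χ X = χ (kernel f) + χ (image f) := by
  have h1 := chi_epi hχ (factorThruImage f)
  have h2 : χ (kernel f) = χ (kernel (factorThruImage f)) := by
    conv_lhs => rw [← image.fac f]
    exact chi_iso hχ (kernelCompMono _ _)
  omega

lemma chi_tgt {X Y : A} (f : X ⟶ Y) : χ Y = χ (image f) + χ (cokernel f) := by
  have h1 := chi_mono hχ (image.ι f)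
  have h2 : χ (cokernel f) = χ (cokernel (image.ι f)) := by
    conv_lhs => rw [← image.fac f]
    exact chi_iso hχ (cokernelEpiComp _ _)
  omega

lemma chi_im_epi_comp {X Y Z : A} (e : X ⟶ Y) (v : Y ⟶ Z) [Epi e] :
    χ (image (e ≫ v)) = χ (image v) := by
  have h1 := chi_tgt hχ (e ≫ v)
  have h2 := chi_tgt hχ v
  have h3 : χ (cokernel (e ≫ v)) = χ (cokernel v) := chi_iso hχ (cokernelEpiComp e v)
  omega

lemma chi_W_eq {X Y : A} {f : X ⟶ Y} (hf : serreW χ f) : χ X = χ Y := by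
  obtain ⟨h1, h2⟩ := hf
  have h3 := chi_src hχ f
  have h4 := chi_tgt hχ f
  omega
lemma W_id (X : A) : serreW χ (𝟙 X) :=
  ⟨chi_isZero hχ ((isZero_zero A).of_iso (kernel.ofMono _)),
   chi_isZero hχ ((isZero_zero A).of_iso (cokernel.ofEpi _))⟩

lemma W_comp {X Y Z : A} (f : X ⟶ Y) (g : Y ⟶ Z) (hf : serreW χ f) (hg : serreW χ g) :
    serreW χ (f ≫ g) := by
  obtain ⟨hf1, hf2⟩ := hf
  obtain ⟨hg1, hg2⟩ := hg
  constructor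
  · set k := kernel.ι (f ≫ g) with hk
    set h : kernel (f ≫ g) ⟶ Y := k ≫ f with hh
    have hsrc := chi_src hχ h
    have hkh : χ (kernel h) = 0 := by
      have hw : (kernel.ι h ≫ k) ≫ f = 0 := by
        rw [Category.assoc, ← hh, kernel.condition]
      have : Mono (kernel.lift f (kernel.ι h ≫ k) hw) :=
        mono_of_mono_fac (kernel.lift_ι _ _ hw)
      have := chi_mono_le hχ (kernel.lift f (kernel.ι h ≫ k) hw)
      omega
    have him : χ (image h) = 0 := by
      have hcond : image.ι h ≫ g = 0 := by
        rw [← cancel_epi (factorThruImage h), ← Category.assoc, image.fac, comp_zero,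
          hh, Category.assoc, kernel.condition]
      have : Mono (kernel.lift g (image.ι h) hcond) :=
        mono_of_mono_fac (kernel.lift_ι _ _ hcond)
      have := chi_mono_le hχ (kernel.lift g (image.ι h) hcond)
      omega
    omega
  · set q := cokernel.π (f ≫ g) with hq
    set h : Y ⟶ cokernel (f ≫ g) := g ≫ q with hh
    have htgt := chi_tgt hχ h
    have hch : χ (cokernel h) = 0 := by
      have hw : g ≫ q ≫ cokernel.π h = 0 := by
        rw [← Category.assoc, ← hh, cokernel.condition]
      have : Epi (cokernel.desc g (q ≫ cokernel.π h) hw) :=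
        epi_of_epi_fac (cokernel.π_desc _ _ hw)
      have := chi_epi_le hχ (cokernel.desc g (q ≫ cokernel.π h) hw)
      omega
    have him : χ (image h) = 0 := by
      have hw : f ≫ h = 0 := by
        rw [hh, ← Category.assoc, hq, cokernel.condition]
      have hfac : cokernel.π f ≫ cokernel.desc f h hw = h := cokernel.π_desc _ _ hw
      have h1 : χ (image h) = χ (image (cokernel.desc f h hw)) := by
        conv_lhs => rw [← hfac]
        exact chi_im_epi_comp hχ _ _
      have h2 := chi_src hχ (cokernel.desc f h hw)
      omega
    omega

lemma W_ore {X' X Y : A} (s : X' ⟶ X) (hs : serreW χ s) (f : X' ⟶ Y) :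
    ∃ (P : A) (f' : X ⟶ P) (s' : Y ⟶ P), serreW χ s' ∧ f ≫ s' = s ≫ f' := by
  obtain ⟨hs1, hs2⟩ := hs
  set g : X' ⟶ X ⊞ Y := biprod.lift s (-f) with hg
  set π := cokernel.π g with hπ
  have hcomm : f ≫ (biprod.inr ≫ π) = s ≫ (biprod.inl ≫ π) := by
    have h0 : (s ≫ biprod.inl - f ≫ biprod.inr) ≫ π = 0 := by
      have : s ≫ biprod.inl - f ≫ biprod.inr = g := by
        rw [hg]; ext <;> simp
      rw [this, hπ, cokernel.condition]
    rw [Preadditive.sub_comp, sub_eq_zero] at h0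
    simp only [Category.assoc] at h0 ⊢
    exact h0.symm
  refine ⟨cokernel g, biprod.inl ≫ π, biprod.inr ≫ π, ⟨?_, ?_⟩, hcomm⟩
  · -- kernel part
    set t : Y ⟶ cokernel g := biprod.inr ≫ π with ht
    have h1 : (kernel.ι t ≫ biprod.inr) ≫ π = 0 := by
      rw [Category.assoc, ← ht, kernel.condition]
    set u : kernel t ⟶ kernel π := kernel.lift π _ h1 with hu
    have huι : u ≫ kernel.ι π = kernel.ι t ≫ biprod.inr := kernel.lift_ι _ _ h1
    set v : kernel π ⟶ X := kernel.ι π ≫ biprod.fst with hv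
    have huv : u ≫ v = 0 := by
      rw [hv, ← Category.assoc, huι, Category.assoc, biprod.inr_fst, comp_zero]
    have hmw : Mono (kernel.lift v u huv) := mono_of_mono_fac (kernel.lift_ι _ _ huv)
    have hle : χ (kernel t) ≤ χ (kernel v) := chi_mono_le hχ (kernel.lift v u huv)
    -- now show χ (kernel v) = 0
    set e' : X' ⟶ kernel π := kernel.lift π g (cokernel.condition g) with he'
    haveI hee : Epi e' := inferInstanceAs (Epi (Abelian.factorThruImage g))
    have he'v : e' ≫ v = s := by
      rw [hv, ← Category.assoc, he', kernel.lift_ι, hg, biprod.lift_fst]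
    have hkv := chi_src hχ v
    have h2 : χ (image (e' ≫ v)) = χ (image v) := chi_im_epi_comp hχ e' v
    rw [he'v] at h2
    have h3 := chi_src hχ s
    have h4 : χ (kernel π) ≤ χ X' := chi_epi_le hχ e'
    omega
  · -- cokernel part
    set t : Y ⟶ cokernel g := biprod.inr ≫ π with ht
    set q := cokernel.π t with hqd
    set y : X ⟶ cokernel t := biprod.inl ≫ π ≫ q with hy
    have hy0 : s ≫ y = 0 := by
      calc s ≫ y = (f ≫ t) ≫ q := by
            rw [hy, hcomm]; simp only [Category.assoc]
        _ = 0 := by rw [Category.assoc, hqd, cokernel.condition, comp_zero]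
    have hepiy : Epi y := by
      have hfac : biprod.fst ≫ y = π ≫ q := by
        have hz := cokernel.condition t
        rw [ht] at hz
        simp only [Category.assoc] at hz
        apply biprod.hom_ext'
        · simp [hy]
        · simp [hy, hz]; exact hz.symm
      have : Epi ((biprod.fst : X ⊞ Y ⟶ X) ≫ y) := by rw [hfac]; infer_instance
      exact epi_of_epi (biprod.fst : X ⊞ Y ⟶ X) y
    have hd : Epi (cokernel.desc s y hy0) := epi_of_epi_fac (cokernel.π_desc _ _ hy0)
    have := chi_epi_le hχ (cokernel.desc s y hy0)
    omega


lemma chi_im_of_epi {X Y : A} (u : X ⟶ Y) [Epi u] : χ (image u) = χ Y := by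
  have h1 := chi_tgt hχ u
  have h2 : χ (cokernel u) = 0 :=
    chi_isZero hχ ((isZero_zero A).of_iso (cokernel.ofEpi u))
  omega

/-- `χ (kernel (cokernel.π h)) = χ (image h)`. -/
lemma chi_ker_coker {X Y : A} (h : X ⟶ Y) :
    χ (kernel (cokernel.π h)) = χ (image h) := by
  have h1 := chi_src hχ (cokernel.π h)
  have h2 := chi_tgt hχ h
  have h3 := chi_im_of_epi hχ (cokernel.π h)
  omega

lemma W_ext {X' X Y : A} (f₁ f₂ : X ⟶ Y) (s : X' ⟶ X) (hs : serreW χ s)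
    (hst : s ≫ f₁ = s ≫ f₂) :
    ∃ (Y' : A) (t : Y ⟶ Y') (_ : serreW χ t), f₁ ≫ t = f₂ ≫ t := by
  obtain ⟨hs1, hs2⟩ := hs
  set h : X ⟶ Y := f₁ - f₂ with hh
  have hsh : s ≫ h = 0 := by
    rw [hh, Preadditive.comp_sub, hst, sub_self]
  refine ⟨cokernel h, cokernel.π h, ⟨?_, ?_⟩, ?_⟩
  · -- χ (kernel (cokernel.π h)) = 0
    rw [chi_ker_coker hχ h]
    have hfac : cokernel.π s ≫ cokernel.desc s h hsh = h := cokernel.π_desc _ _ hsh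
    have h1 : χ (image h) = χ (image (cokernel.desc s h hsh)) := by
      conv_lhs => rw [← hfac]
      exact chi_im_epi_comp hχ _ _
    have h2 := chi_src hχ (cokernel.desc s h hsh)
    omega
  · exact chi_isZero hχ ((isZero_zero A).of_iso (cokernel.ofEpi _))
  · have := cokernel.condition h
    rw [hh, Preadditive.sub_comp, sub_eq_zero] at this
    exact this

lemma hasLeftCalculus : (serreW χ).HasLeftCalculusOfFractions where
  id_mem := W_id hχ
  comp_mem _ _ hf hg := W_comp hχ _ _ hf hg
  exists_leftFraction X Y φ := by
    obtain ⟨P, f', s', hs', hcomm⟩ := W_ore hχ φ.s φ.hs φ.f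
    exact ⟨MorphismProperty.LeftFraction.mk f' s' hs', hcomm⟩
  ext X' X Y f₁ f₂ s hs hst := W_ext hχ f₁ f₂ s hs hst

end SerreAux

section Loc

variable {A : Type u} [Category.{v} A] [Abelian A] {χ : A → ℕ} (hχ : IsAdditiveFn χ)
  {D : Type u'} [Category.{v'} D] (L : A ⥤ D) [L.IsLocalization (serreW χ)]

include hχ

lemma chi_key {P Q : A} (ψ : L.obj P ⟶ L.obj Q) [hψm : Mono ψ] :
    χ P ≤ χ Q ∧ (¬ IsIso ψ → χ P < χ Q) := by
  haveI := SerreAux.hasLeftCalculus hχ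
  obtain ⟨φ, rfl⟩ := Localization.exists_leftFraction L (serreW χ) ψ
  have hmap := φ.map_comp_map_s L (Localization.inverts L (serreW χ))
  haveI : IsIso (L.map φ.s) := Localization.inverts L (serreW χ) φ.s φ.hs
  haveI : Mono (L.map φ.f) := by rw [← hmap]; exact mono_comp _ _
  have hker : χ (kernel φ.f) = 0 := by
    have h0 : L.map (kernel.ι φ.f) = L.map (0 : kernel φ.f ⟶ P) := by
      apply (cancel_mono (L.map φ.f)).1
      rw [← L.map_comp, ← L.map_comp, kernel.condition, zero_comp]
    obtain ⟨Z, t, ht, hts⟩ := (MorphismProperty.map_eq_iff_postcomp L (serreW χ) _ _).1 h0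
    rw [zero_comp] at hts
    haveI : Mono (kernel.lift t (kernel.ι φ.f) hts) :=
      mono_of_mono_fac (kernel.lift_ι _ _ hts)
    have h1 := SerreAux.chi_mono_le hχ (kernel.lift t (kernel.ι φ.f) hts)
    have h2 := ht.1
    omega
  have h1 := SerreAux.chi_src hχ φ.f
  have h2 := SerreAux.chi_tgt hχ φ.f
  have h3 : χ Q = χ φ.Y' := SerreAux.chi_W_eq hχ φ.hs
  refine ⟨by omega, fun hni => ?_⟩
  by_contra hlt
  push_neg at hlt
  have hcoker : χ (cokernel φ.f) = 0 := by omega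
  haveI : IsIso (L.map φ.f) := Localization.inverts L (serreW χ) φ.f ⟨hker, hcoker⟩
  haveI : IsIso (φ.map L (Localization.inverts L (serreW χ)) ≫ L.map φ.s) := by
    rw [hmap]; infer_instance
  exact hni (IsIso.of_isIso_comp_right _ (L.map φ.s))

end Loc

/-- If `χ` is an additive function on an abelian category `A` and
`L : A ⥤ D` is the Gabriel quotient of `A` by the Serre subcategory
`S_χ = {X | χ X = 0}` (i.e. the localization of `A` at the morphisms whose kernel
and cokernel lie in `S_χ`), then the image `L.obj X` of any object `X` has finite
length at most `χ X`: every strictly increasing chain of subobjects of `L.obj X`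
has at most `χ X + 1` terms. -/
theorem length_le_of_additive {A : Type u} [Category.{v} A] [Abelian A]
    {D : Type u'} [Category.{v'} D] [Abelian D]
    (χ : A → ℕ) (hχ : IsAdditiveFn χ)
    (L : A ⥤ D) [L.IsLocalization (serreW χ)]
    (X : A) (m : ℕ) (c : Fin m → Subobject (L.obj X)) (hc : StrictMono c) :
    m ≤ χ X + 1 := by
  haveI := SerreAux.hasLeftCalculus hχ
  haveI : L.EssSurj := Localization.essSurj L (serreW χ)
  rcases Nat.eq_zero_or_pos m with rfl | hm
  · exact Nat.zero_le _
  set P : Fin m → A := fun i => L.objPreimage ((c i : D)) with hP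
  have key2 : ∀ i j : Fin m, i < j → χ (P i) < χ (P j) := by
    intro i j hij
    set e1 := L.objObjPreimageIso ((c i : D)) with he1
    set e2 := L.objObjPreimageIso ((c j : D)) with he2
    set ψ : L.obj (P i) ⟶ L.obj (P j) :=
      e1.hom ≫ Subobject.ofLE _ _ (hc hij).le ≫ e2.inv with hψ
    haveI : Mono ψ := by rw [hψ]; exact mono_comp _ _
    have hni : ¬ IsIso ψ := by
      intro hiso
      haveI := hiso
      haveI : IsIso (Subobject.ofLE _ _ (hc hij).le) := by
        have heq : Subobject.ofLE _ _ (hc hij).le = e1.inv ≫ ψ ≫ e2.hom := by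
          rw [hψ]; simp
        rw [heq]; infer_instance
      have hle : c j ≤ c i := by
        refine Subobject.le_of_comm (inv (Subobject.ofLE _ _ (hc hij).le)) ?_
        rw [IsIso.inv_comp_eq]
        exact (Subobject.ofLE_arrow (hc hij).le).symm
      exact (hc hij).not_ge hle
    exact (chi_key hχ L ψ).2 hni
  have hmono : ∀ k (hk : k < m), k ≤ χ (P ⟨k, hk⟩) := by
    intro k
    induction k with
    | zero => intro _; exact Nat.zero_le _
    | succ n ih =>
      intro hk
      have h1 := ih (Nat.lt_of_succ_lt hk)
      have h2 := key2 ⟨n, Nat.lt_of_succ_lt hk⟩ ⟨n + 1, hk⟩ (by simp [Fin.lt_def])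
      omega
  have hlast : χ (P ⟨m - 1, by omega⟩) ≤ χ X := by
    set i : Fin m := ⟨m - 1, by omega⟩ with hi
    set e1 := L.objObjPreimageIso ((c i : D)) with he1
    haveI : Mono (e1.hom ≫ (c i).arrow) := mono_comp _ _
    exact (chi_key hχ L (e1.hom ≫ (c i).arrow)).1
  have := hmono (m - 1) (by omega)
  omega
end

section
/- Every additive function χ : Ob A → ℕ on an abelian category A can be written uniquely as a locally finite sum of irreducible additive functions. (Locally finite means: for each object X, only finitely many summands are nonzero at X. Irreducible means: nonzero and not expressible as a sum of two nonzero additive functions.) -/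
open CategoryTheory CategoryTheory.Limits

universe v u

/-- An additive function is *irreducible* if it is nonzero and cannot be written
as the (pointwise) sum of two nonzero additive functions. -/
def IsIrreducibleAdd {A : Type u} [Category.{v} A] [Abelian A] (χ : A → ℕ) : Prop :=
  (∃ X : A, χ X ≠ 0) ∧
    ∀ φ ψ : A → ℕ, IsAdditiveFn φ → IsAdditiveFn ψ → (∀ X : A, χ X = φ X + ψ X) →
      (∀ X : A, φ X = 0) ∨ (∀ X : A, ψ X = 0)

set_option linter.unusedSectionVars false

namespace AddFnProof

variable {A : Type u} [Category.{v} A] [Abelian A]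

/-- Build a short exact sequence from `Epi g` and `f` a kernel of `g`. -/
lemma shortExact_of_isLimit (S : ShortComplex A) (hg : Epi S.g)
    (h : IsLimit (KernelFork.ofι S.f S.zero)) : S.ShortExact :=
  { exact := S.exact_of_f_is_kernel h
    mono_f := mono_of_isLimit_fork h
    epi_g := hg }

/-- The short complex `ker h → X → im h`. -/
@[simps] noncomputable def scKI {X Y : A} (h : X ⟶ Y) : ShortComplex A :=
  ShortComplex.mk (kernel.ι h) (Abelian.factorThruImage h) (by
    rw [← cancel_mono (Abelian.image.ι h), Category.assoc, Abelian.image.fac, zero_comp,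
      kernel.condition])

lemma scKI_shortExact {X Y : A} (h : X ⟶ Y) : (scKI h).ShortExact := by
  apply shortExact_of_isLimit _ (by dsimp [scKI]; infer_instance)
  exact KernelFork.IsLimit.ofι _ _
    (fun k hk => kernel.lift h k (by
      rw [← Abelian.image.fac h]
      exact (Category.assoc _ _ _).symm.trans
        ((congrArg (· ≫ Abelian.image.ι h) hk).trans zero_comp)))
    (fun k hk => kernel.lift_ι _ _ _)
    (fun k hk m hm => by
      exact (cancel_mono (kernel.ι h)).1 (hm.trans (kernel.lift_ι _ _ _).symm))

/-- The short complex `im h → Y → coker h`. -/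
@[simps] noncomputable def scIC {X Y : A} (h : X ⟶ Y) : ShortComplex A :=
  ShortComplex.mk (Abelian.image.ι h) (cokernel.π h) (kernel.condition _)

lemma scIC_shortExact {X Y : A} (h : X ⟶ Y) : (scIC h).ShortExact := by
  apply shortExact_of_isLimit _ (by dsimp [scIC]; infer_instance)
  exact kernelIsKernel (cokernel.π h)

section Chi

variable (χ : A → ℕ) (hχ : IsAdditiveFn χ)

include hχ in
lemma chi_isZero {X : A} (hX : IsZero X) : χ X = 0 := by
  have hS : (ShortComplex.mk (0 : X ⟶ X) (0 : X ⟶ X) (by simp)).ShortExact :=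
    { exact := ShortComplex.exact_of_isZero_X₂ _ hX
      mono_f := ⟨fun g h _ => hX.eq_of_tgt g h⟩
      epi_g := ⟨fun g h _ => hX.eq_of_src g h⟩ }
  have := hχ _ hS
  dsimp at this
  omega

include hχ in
lemma chi_eq_ker_add_im {X Y : A} (h : X ⟶ Y) :
    χ X = χ (kernel h) + χ (Abelian.image h) := hχ _ (scKI_shortExact h)

include hχ in
lemma chi_eq_im_add_coker {X Y : A} (h : X ⟶ Y) :
    χ Y = χ (Abelian.image h) + χ (cokernel h) := hχ _ (scIC_shortExact h)

include hχ in
lemma chi_iso {X Y : A} (e : X ≅ Y) : χ X = χ Y := by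
  have h1 := chi_eq_ker_add_im χ hχ e.hom
  have h2 := chi_eq_im_add_coker χ hχ e.hom
  have hk : χ (kernel e.hom) = 0 :=
    chi_isZero χ hχ (IsZero.of_iso (isZero_zero A) (kernel.ofMono e.hom))
  have hc : χ (cokernel e.hom) = 0 :=
    chi_isZero χ hχ (IsZero.of_iso (isZero_zero A) (cokernel.ofEpi e.hom))
  omega

include hχ in
lemma chi_mono_le {X Y : A} (i : X ⟶ Y) [Mono i] : χ X ≤ χ Y := by
  have h2 := chi_eq_im_add_coker χ hχ i
  have : χ (Abelian.image i) = χ X :=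
    (chi_iso χ hχ (asIso (Abelian.factorThruImage i))).symm
  omega

include hχ in
lemma chi_epi_le {X Y : A} (p : X ⟶ Y) [Epi p] : χ Y ≤ χ X := by
  have h1 := chi_eq_ker_add_im χ hχ p
  have h2 := chi_eq_im_add_coker χ hχ p
  have : χ (cokernel p) = 0 :=
    chi_isZero χ hχ (IsZero.of_iso (isZero_zero A) (cokernel.ofEpi p))
  omega

end Chi

end AddFnProof

namespace AddFnProof

variable {A : Type u} [Category.{v} A] [Abelian A]

lemma isIso_abelianImageToKernel (S : ShortComplex A) (hS : S.Exact) :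
    IsIso S.abelianImageToKernel := by
  have hγ : kernel.ι S.g ≫ cokernel.π S.f = 0 :=
    (S.exact_iff_kernel_ι_comp_cokernel_π_zero).1 hS
  obtain ⟨l, hl⟩ := KernelFork.IsLimit.lift' S.abelianImageToKernelIsKernel (𝟙 _)
    (by rw [Category.id_comp]; exact hγ)
  have : Epi S.abelianImageToKernel :=
    @IsSplitEpi.epi _ _ _ _ _ ⟨⟨⟨l, hl⟩⟩⟩
  exact isIso_of_mono_of_epi _

/-- In an exact complex, `kernel g` is isomorphic to `Abelian.image f`. -/
noncomputable def exactKerIso (S : ShortComplex A) (hS : S.Exact) :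
    Abelian.image S.f ≅ kernel S.g :=
  @asIso _ _ _ _ _ (isIso_abelianImageToKernel S hS)

/-- `f` is a `χ`-isomorphism. -/
def ChiIso (χ : A → ℕ) {X Y : A} (f : X ⟶ Y) : Prop :=
  χ (kernel f) = 0 ∧ χ (cokernel f) = 0

section Chi

variable (χ : A → ℕ) (hχ : IsAdditiveFn χ)

include hχ

lemma chi_of_chiIso {X Y : A} {f : X ⟶ Y} (h : ChiIso χ f) : χ X = χ Y := by
  have h1 := chi_eq_ker_add_im χ hχ f
  have h2 := chi_eq_im_add_coker χ hχ f
  obtain ⟨hk, hc⟩ := h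
  omega

lemma chiIso_of_isIso {X Y : A} (f : X ⟶ Y) [IsIso f] : ChiIso χ f :=
  ⟨chi_isZero χ hχ (IsZero.of_iso (isZero_zero A) (kernel.ofMono f)),
   chi_isZero χ hχ (IsZero.of_iso (isZero_zero A) (cokernel.ofEpi f))⟩

lemma chiIso_of_mono {X Y : A} (f : X ⟶ Y) [Mono f] (hc : χ (cokernel f) = 0) :
    ChiIso χ f :=
  ⟨chi_isZero χ hχ (IsZero.of_iso (isZero_zero A) (kernel.ofMono f)), hc⟩

lemma chiIso_of_epi {X Y : A} (f : X ⟶ Y) [Epi f] (hk : χ (kernel f) = 0) :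
    ChiIso χ f :=
  ⟨hk, chi_isZero χ hχ (IsZero.of_iso (isZero_zero A) (cokernel.ofEpi f))⟩

section PseudoChases

open CategoryTheory.Abelian

attribute [local instance] Pseudoelement.objectToSort Pseudoelement.homToFun

lemma chiIso_comp {X Y Z : A} {f : X ⟶ Y} {g : Y ⟶ Z}
    (hf : ChiIso χ f) (hg : ChiIso χ g) : ChiIso χ (f ≫ g) := by
  constructor
  · -- kernel side
    let u : kernel (f ≫ g) ⟶ kernel g :=
      kernel.lift g (kernel.ι _ ≫ f) (by rw [Category.assoc, kernel.condition])
    let s : kernel f ⟶ kernel (f ≫ g) :=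
      kernel.lift (f ≫ g) (kernel.ι f) (by rw [← Category.assoc, kernel.condition, zero_comp])
    have hu : u ≫ kernel.ι g = kernel.ι (f ≫ g) ≫ f := kernel.lift_ι _ _ _
    have hs : s ≫ kernel.ι (f ≫ g) = kernel.ι f := kernel.lift_ι _ _ _
    have hsu : s ≫ u = 0 := by
      rw [← cancel_mono (kernel.ι g), Category.assoc, zero_comp, hu, ← Category.assoc, hs,
        kernel.condition]
    have hT : (ShortComplex.mk s u hsu).Exact := by
      apply Pseudoelement.exact_of_pseudo_exact
      intro x hx
      have h1 : f ((kernel.ι (f ≫ g)) x) = 0 := by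
        rw [← Pseudoelement.comp_apply, ← hu, Pseudoelement.comp_apply]
        erw [hx]
        exact Pseudoelement.apply_zero _
      have hexact : (ShortComplex.mk (kernel.ι f) f (kernel.condition f)).Exact :=
        ShortComplex.exact_of_f_is_kernel _ (kernelIsKernel f)
      obtain ⟨a, ha⟩ := Pseudoelement.pseudo_exact_of_exact (C := A) hexact _ h1
      refine ⟨a, Pseudoelement.pseudo_injective_of_mono (kernel.ι (f ≫ g)) ?_⟩
      rw [← Pseudoelement.comp_apply, hs]
      exact ha
    have e1 := chi_eq_ker_add_im χ hχ u
    have e2 : χ (kernel u) = χ (Abelian.image s) :=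
      (chi_iso χ hχ (exactKerIso _ hT)).symm
    have e3 : χ (Abelian.image s) ≤ χ (kernel f) :=
      chi_epi_le χ hχ (Abelian.factorThruImage s)
    have e4 : χ (Abelian.image u) ≤ χ (kernel g) :=
      chi_mono_le χ hχ (Abelian.image.ι u)
    obtain ⟨hfk, -⟩ := hf; obtain ⟨hgk, -⟩ := hg
    omega
  · -- cokernel side
    let t : cokernel f ⟶ cokernel (f ≫ g) :=
      cokernel.desc f (g ≫ cokernel.π (f ≫ g)) (by rw [← Category.assoc, cokernel.condition])
    let w : cokernel (f ≫ g) ⟶ cokernel g :=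
      cokernel.desc (f ≫ g) (cokernel.π g) (by rw [Category.assoc, cokernel.condition, comp_zero])
    have ht : cokernel.π f ≫ t = g ≫ cokernel.π (f ≫ g) := cokernel.π_desc _ _ _
    have hw : cokernel.π (f ≫ g) ≫ w = cokernel.π g := cokernel.π_desc _ _ _
    have htw : t ≫ w = 0 := by
      rw [← cancel_epi (cokernel.π f), comp_zero, ← Category.assoc, ht, Category.assoc, hw,
        cokernel.condition]
    have hT : (ShortComplex.mk t w htw).Exact := by
      apply Pseudoelement.exact_of_pseudo_exact
      intro x hx
      obtain ⟨z, hz⟩ := Pseudoelement.pseudo_surjective_of_epi (cokernel.π (f ≫ g)) x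
      have h1 : (cokernel.π g) z = 0 := by
        rw [← hw, Pseudoelement.comp_apply]
        erw [hz]
        exact hx
      have hexact : (ShortComplex.mk g (cokernel.π g) (cokernel.condition g)).Exact :=
        ShortComplex.exact_of_g_is_cokernel _ (cokernelIsCokernel g)
      obtain ⟨y, hy⟩ := Pseudoelement.pseudo_exact_of_exact (C := A) hexact _ h1
      refine ⟨(cokernel.π f) y, ?_⟩
      rw [← Pseudoelement.comp_apply, ht, Pseudoelement.comp_apply]
      erw [hy]
      exact hz
    have e1 := chi_eq_ker_add_im χ hχ w
    have e2 : χ (kernel w) = χ (Abelian.image t) :=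
      (chi_iso χ hχ (exactKerIso _ hT)).symm
    have e3 : χ (Abelian.image t) ≤ χ (cokernel f) :=
      chi_epi_le χ hχ (Abelian.factorThruImage t)
    have e4 : χ (Abelian.image w) ≤ χ (cokernel g) :=
      chi_mono_le χ hχ (Abelian.image.ι w)
    obtain ⟨-, hfc⟩ := hf; obtain ⟨-, hgc⟩ := hg
    omega

lemma chiIso_pullback_fst {X Y Z : A} (f : X ⟶ Z) (g : Y ⟶ Z) (hg : ChiIso χ g) :
    ChiIso χ (pullback.fst f g) := by
  constructor
  · -- kernel
    let v : kernel (pullback.fst f g) ⟶ kernel g :=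
      kernel.lift g (kernel.ι _ ≫ pullback.snd f g) (by
        rw [Category.assoc, ← pullback.condition, ← Category.assoc, kernel.condition, zero_comp])
    have hvι : v ≫ kernel.ι g = kernel.ι _ ≫ pullback.snd f g := kernel.lift_ι _ _ _
    have hv : Mono v := by
      apply Preadditive.mono_of_cancel_zero
      intro T a ha
      have h2 : a ≫ kernel.ι (pullback.fst f g) = 0 := by
        apply pullback.hom_ext
        · rw [Category.assoc, kernel.condition, comp_zero, zero_comp]
        · rw [Category.assoc, ← hvι, ← Category.assoc, ha, zero_comp, zero_comp]
      exact zero_of_comp_mono (kernel.ι _) h2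
    have := chi_mono_le χ hχ v
    have hgk := hg.1
    omega
  · -- cokernel
    let c : cokernel (pullback.fst f g) ⟶ cokernel g :=
      cokernel.desc _ (f ≫ cokernel.π g) (by
        rw [pullback.condition_assoc, cokernel.condition, comp_zero])
    have hc : cokernel.π _ ≫ c = f ≫ cokernel.π g := cokernel.π_desc _ _ _
    have hmc : Mono c := by
      apply Pseudoelement.mono_of_zero_of_map_zero
      intro a ha
      obtain ⟨x, hx⟩ := Pseudoelement.pseudo_surjective_of_epi (cokernel.π (pullback.fst f g)) a
      have h1 : (cokernel.π g) (f x) = 0 := by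
        rw [← Pseudoelement.comp_apply, ← hc, Pseudoelement.comp_apply]
        erw [hx]
        exact ha
      have hexact : (ShortComplex.mk g (cokernel.π g) (cokernel.condition g)).Exact :=
        ShortComplex.exact_of_g_is_cokernel _ (cokernelIsCokernel g)
      obtain ⟨y, hy⟩ := Pseudoelement.pseudo_exact_of_exact (C := A) hexact _ h1
      obtain ⟨sP, hs1, hs2⟩ := Pseudoelement.pseudo_pullback (f := f) (g := g) (p := x) (q := y)
        hy.symm
      rw [← hx, ← hs1, ← Pseudoelement.comp_apply, cokernel.condition]
      exact Pseudoelement.zero_apply _ _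
    have := chi_mono_le χ hχ c
    have hgc := hg.2
    omega

end PseudoChases

end Chi

/-- Two objects are `χ`-related if there is a roof of `χ`-isomorphisms between them. -/
def Rel (χ : A → ℕ) (X Y : A) : Prop :=
  ∃ (U : A) (f : U ⟶ X) (g : U ⟶ Y), ChiIso χ f ∧ ChiIso χ g

/-- `X` is `χ`-simple. -/
def ChiSimple (χ : A → ℕ) (X : A) : Prop :=
  χ X ≠ 0 ∧ ∀ (Y : A) (i : Y ⟶ X), Mono i → χ Y = 0 ∨ χ Y = χ X

section Rel

variable (χ : A → ℕ) (hχ : IsAdditiveFn χ)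

include hχ

lemma rel_refl (X : A) : Rel χ X X :=
  ⟨X, 𝟙 X, 𝟙 X, chiIso_of_isIso χ hχ _, chiIso_of_isIso χ hχ _⟩

omit hχ in
lemma rel_symm {X Y : A} (h : Rel χ X Y) : Rel χ Y X := by
  obtain ⟨U, f, g, hf, hg⟩ := h; exact ⟨U, g, f, hg, hf⟩

lemma rel_trans {X Y Z : A} (h1 : Rel χ X Y) (h2 : Rel χ Y Z) : Rel χ X Z := by
  obtain ⟨U, a, b, ha, hb⟩ := h1
  obtain ⟨V, c, d, hc, hd⟩ := h2
  have h1 : ChiIso χ (pullback.fst b c) := chiIso_pullback_fst χ hχ b c hc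
  have h2 : ChiIso χ (pullback.snd b c) := by
    rw [← pullbackSymmetry_hom_comp_fst]
    exact chiIso_comp χ hχ (chiIso_of_isIso χ hχ _) (chiIso_pullback_fst χ hχ c b hb)
  exact ⟨pullback b c, pullback.fst b c ≫ a, pullback.snd b c ≫ d,
    chiIso_comp χ hχ h1 ha, chiIso_comp χ hχ h2 hd⟩

omit hχ in
lemma const_of_chiIso (ψ : A → ℕ) (hψ : IsAdditiveFn ψ) (hle : ∀ T, ψ T ≤ χ T)
    {X Y : A} {f : X ⟶ Y} (hf : ChiIso χ f) : ψ X = ψ Y := by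
  have h1 := chi_eq_ker_add_im ψ hψ f
  have h2 := chi_eq_im_add_coker ψ hψ f
  have h3 := hle (kernel f)
  have h4 := hle (cokernel f)
  have h5 := hf.1
  have h6 := hf.2
  omega

lemma const_of_rel (ψ : A → ℕ) (hψ : IsAdditiveFn ψ) (hle : ∀ T, ψ T ≤ χ T)
    {X Y : A} (h : Rel χ X Y) : ψ X = ψ Y := by
  obtain ⟨U, f, g, hf, hg⟩ := h
  rw [← const_of_chiIso χ ψ hψ hle hf, const_of_chiIso χ ψ hψ hle hg]

lemma chi_of_rel {X Y : A} (h : Rel χ X Y) : χ X = χ Y :=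
  const_of_rel χ hχ χ hχ (fun _ => le_rfl) h

lemma chiSimple_src_of_chiIso {Z X : A} {f : Z ⟶ X} (hf : ChiIso χ f)
    (hX : ChiSimple χ X) : ChiSimple χ Z := by
  have hZX : χ Z = χ X := chi_of_chiIso χ hχ hf
  refine ⟨by rw [hZX]; exact hX.1, fun W i hi => ?_⟩
  have := hi
  have h1 := chi_eq_ker_add_im χ hχ (i ≫ f)
  -- kernel (i ≫ f) has χ = 0
  have hk : χ (kernel (i ≫ f)) = 0 := by
    let k : kernel (i ≫ f) ⟶ kernel f :=
      kernel.lift f (kernel.ι _ ≫ i) (by rw [Category.assoc, kernel.condition])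
    have hkι : k ≫ kernel.ι f = kernel.ι _ ≫ i := kernel.lift_ι _ _ _
    have : Mono (k ≫ kernel.ι f) := by rw [hkι]; exact mono_comp _ _
    have : Mono k := mono_of_mono k (kernel.ι f)
    have := chi_mono_le χ hχ k
    have := hf.1
    omega
  have him := hX.2 (Abelian.image (i ≫ f)) (Abelian.image.ι (i ≫ f)) inferInstance
  rw [hZX]
  omega

lemma chiSimple_tgt_of_chiIso {Z X : A} {f : Z ⟶ X} (hf : ChiIso χ f)
    (hZ : ChiSimple χ Z) : ChiSimple χ X := by
  have hZX : χ Z = χ X := chi_of_chiIso χ hχ hf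
  refine ⟨by rw [← hZX]; exact hZ.1, fun V i hi => ?_⟩
  have := hi
  have h1 : ChiIso χ (pullback.fst i f) := chiIso_pullback_fst χ hχ i f hf
  have h2 : χ (pullback i f) = χ V := chi_of_chiIso χ hχ h1
  have hmono : Mono (pullback.snd i f) := inferInstance
  have h3 := hZ.2 (pullback i f) (pullback.snd i f) hmono
  omega

lemma chiSimple_of_rel {X Y : A} (h : Rel χ X Y) (hX : ChiSimple χ X) : ChiSimple χ Y := by
  obtain ⟨U, f, g, hf, hg⟩ := h
  exact chiSimple_tgt_of_chiIso χ hχ hg (chiSimple_src_of_chiIso χ hχ hf hX)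

lemma ses_dichotomy {S : ShortComplex A} (hS : S.ShortExact) (hB : ChiSimple χ S.X₂) :
    (χ S.X₁ = 0 ∧ Rel χ S.X₂ S.X₃) ∨ (Rel χ S.X₁ S.X₂ ∧ χ S.X₃ = 0) := by
  have hmono : Mono S.f := hS.mono_f
  have hepi : Epi S.g := hS.epi_g
  have hadd := hχ S hS
  rcases hB.2 S.X₁ S.f hmono with h1 | h1
  · left
    refine ⟨h1, ?_⟩
    have hkg : χ (kernel S.g) = 0 := by
      have e : S.X₁ ≅ kernel S.g :=
        IsLimit.conePointUniqueUpToIso hS.fIsKernel (limit.isLimit _)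
      rw [← chi_iso χ hχ e]; exact h1
    have : ChiIso χ S.g := chiIso_of_epi χ hχ S.g hkg
    exact ⟨S.X₂, 𝟙 _, S.g, chiIso_of_isIso χ hχ _, this⟩
  · right
    have h3 : χ S.X₃ = 0 := by omega
    refine ⟨?_, h3⟩
    have hcf : χ (cokernel S.f) = 0 := by
      have e : cokernel S.f ≅ S.X₃ :=
        IsColimit.coconePointUniqueUpToIso (colimit.isColimit _) hS.gIsCokernel
      rw [chi_iso χ hχ e]; exact h3
    have : ChiIso χ S.f := chiIso_of_mono χ hχ S.f hcf
    exact ⟨S.X₁, 𝟙 _, S.f, chiIso_of_isIso χ hχ _, this⟩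

lemma dichotomy {S₀ : A} (hS₀ : ChiSimple χ S₀) {S : ShortComplex A} (hS : S.ShortExact)
    (hrel : Rel χ S₀ S.X₂) :
    (χ S.X₁ = 0 ∧ Rel χ S₀ S.X₃) ∨ (Rel χ S₀ S.X₁ ∧ χ S.X₃ = 0) := by
  have hB : ChiSimple χ S.X₂ := chiSimple_of_rel χ hχ hrel hS₀
  rcases ses_dichotomy χ hχ hS hB with ⟨h1, h2⟩ | ⟨h1, h2⟩
  · exact Or.inl ⟨h1, rel_trans χ hχ hrel h2⟩
  · exact Or.inr ⟨rel_trans χ hχ hrel (rel_symm χ h1), h2⟩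

end Rel

/-- Witnesses that `Z` has at least `n` composition factors in the `χ`-class of `S₀`. -/
inductive Cnt (χ : A → ℕ) (S₀ : A) : A → ℕ → Prop
  | self (Z : A) : Rel χ S₀ Z → Cnt χ S₀ Z 1
  | zero (Z : A) : Cnt χ S₀ Z 0
  | ses {S : ShortComplex A} (hS : S.ShortExact) {a b : ℕ} :
      Cnt χ S₀ S.X₁ a → Cnt χ S₀ S.X₃ b → Cnt χ S₀ S.X₂ (a + b)

section Count

variable (χ : A → ℕ) (hχ : IsAdditiveFn χ)

include hχ

lemma cnt_chi_le {S₀ Z : A} {n : ℕ} (h : Cnt χ S₀ Z n) : n * χ S₀ ≤ χ Z := by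
  induction h with
  | self Z hrel => rw [chi_of_rel χ hχ hrel, one_mul]
  | zero Z => simp
  | ses hS ha hb iha ihb =>
    have := hχ _ hS
    rw [add_mul]
    omega

lemma cnt_of_iso {S₀ Z : A} {n : ℕ} (h : Cnt χ S₀ Z n) :
    ∀ {Z' : A}, (Z ≅ Z') → Cnt χ S₀ Z' n := by
  induction h with
  | self Z hrel =>
    intro Z' e
    exact Cnt.self _ (rel_trans χ hχ hrel
      ⟨Z, 𝟙 Z, e.hom, chiIso_of_isIso χ hχ _, chiIso_of_isIso χ hχ _⟩)
  | zero Z => intro Z' e; exact Cnt.zero _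
  | ses hS ha hb iha ihb =>
    intro Z' e
    rename_i S a b
    have hS' : (ShortComplex.mk (S.f ≫ e.hom) (e.inv ≫ S.g)
        (by rw [Category.assoc, Iso.hom_inv_id_assoc, S.zero])).ShortExact := by
      refine ShortComplex.shortExact_of_iso ?_ hS
      exact ShortComplex.isoMk (Iso.refl _) e (Iso.refl _) (by simp) (by simp)
    exact Cnt.ses hS' ha hb

lemma cnt_rel_transfer {S₀ T₀ : A} (hrel : Rel χ S₀ T₀) {Z : A} {n : ℕ}
    (h : Cnt χ S₀ Z n) : Cnt χ T₀ Z n := by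
  induction h with
  | self Z h => exact Cnt.self _ (rel_trans χ hχ (rel_symm χ hrel) h)
  | zero Z => exact Cnt.zero _
  | ses hS ha hb iha ihb => exact Cnt.ses hS iha ihb

section Split

open CategoryTheory.Abelian

attribute [local instance] Pseudoelement.objectToSort Pseudoelement.homToFun

lemma cnt_split {S₀ : A} (hS₀ : ChiSimple χ S₀) {Z : A} {n : ℕ} (h : Cnt χ S₀ Z n) :
    ∀ (S : ShortComplex A), S.ShortExact → (S.X₂ ≅ Z) →
      ∃ a b, n ≤ a + b ∧ Cnt χ S₀ S.X₁ a ∧ Cnt χ S₀ S.X₃ b := by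
  induction h with
  | zero Z => exact fun S hS e => ⟨0, 0, by omega, Cnt.zero _, Cnt.zero _⟩
  | self Z hrel =>
    intro S hS e
    have hrel2 : Rel χ S₀ S.X₂ := rel_trans χ hχ hrel
      ⟨Z, 𝟙 Z, e.inv, chiIso_of_isIso χ hχ _, chiIso_of_isIso χ hχ _⟩
    rcases dichotomy χ hχ hS₀ hS hrel2 with ⟨h1, h2⟩ | ⟨h1, h2⟩
    · exact ⟨0, 1, by omega, Cnt.zero _, Cnt.self _ h2⟩
    · exact ⟨1, 0, by omega, Cnt.self _ h1, Cnt.zero _⟩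
  | ses hT ha hb iha ihb =>
    rename_i T a b
    intro S hS e
    haveI := hS.mono_f
    haveI := hS.epi_g
    haveI := hT.mono_f
    haveI := hT.epi_g
    -- replace `S` by an isomorphic SES `S'` with middle object `T.X₂`
    set S' : ShortComplex A := ShortComplex.mk (S.f ≫ e.hom) (e.inv ≫ S.g)
      (by rw [Category.assoc, Iso.hom_inv_id_assoc, S.zero]) with hS'def
    have hS' : S'.ShortExact := by
      refine ShortComplex.shortExact_of_iso ?_ hS
      exact ShortComplex.isoMk (Iso.refl _) e (Iso.refl _) (by simp [S']) (by simp [S'])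
    haveI := hS'.mono_f
    haveI := hS'.epi_g
    set h₁ : S.X₁ ⟶ T.X₃ := S'.f ≫ T.g with hh₁
    set h₂ : T.X₁ ⟶ S.X₃ := T.f ≫ S'.g with hh₂
    -- the map `w : T.X₃ ⟶ cokernel h₂`
    obtain ⟨w, hw⟩ := CokernelCofork.IsColimit.desc' hT.gIsCokernel
      (S'.g ≫ cokernel.π h₂) (by rw [← Category.assoc, ← hh₂, cokernel.condition])
    dsimp at hw
    have hepiw : Epi w := by
      have : Epi (T.g ≫ w) := by
        rw [hw]
        have : Epi (S'.g) := inferInstance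
        apply epi_comp
      exact epi_of_epi T.g w
    -- exactness of `S.X₁ ⟶ T.X₃ ⟶ cokernel h₂`
    have hz : h₁ ≫ w = 0 := by
      rw [hh₁, Category.assoc, hw, ← Category.assoc, S'.zero, zero_comp]
    have hex : (ShortComplex.mk h₁ w hz).Exact := by
      apply Pseudoelement.exact_of_pseudo_exact
      intro x hx
      obtain ⟨z, hz'⟩ := Pseudoelement.pseudo_surjective_of_epi T.g x
      have h1 : (cokernel.π h₂) (S'.g z) = 0 := by
        rw [← Pseudoelement.comp_apply, ← hw, Pseudoelement.comp_apply]
        erw [hz']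
        exact hx
      have hex2 : (ShortComplex.mk h₂ (cokernel.π h₂) (cokernel.condition h₂)).Exact :=
        ShortComplex.exact_of_g_is_cokernel _ (cokernelIsCokernel h₂)
      obtain ⟨y, hy⟩ := Pseudoelement.pseudo_exact_of_exact (C := A) hex2 _ h1
      have hy' : S'.g (T.f y) = S'.g z := by
        rw [← Pseudoelement.comp_apply, ← hh₂]
        exact hy
      obtain ⟨d, hd0, hdg⟩ := Pseudoelement.sub_of_eq_image S'.g z (T.f y) hy'.symm
      obtain ⟨u, hu⟩ := Pseudoelement.pseudo_exact_of_exact (C := A) hS'.exact _ hd0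
      refine ⟨u, ?_⟩
      have hTd : T.g d = T.g z := by
        refine hdg _ T.g ?_
        rw [← Pseudoelement.comp_apply, T.zero]
        exact Pseudoelement.zero_apply _ _
      show h₁ u = x
      rw [hh₁, Pseudoelement.comp_apply]
      erw [hu]
      rw [hTd]
      exact hz'
    -- isomorphisms between the four corner objects
    have iso1 : Abelian.image h₁ ≅ kernel w := exactKerIso _ hex
    have iso2 : Abelian.image w ≅ cokernel h₂ := by
      have hfac : Abelian.factorThruImage w ≫ Abelian.image.ι w = w := Abelian.image.fac w
      have : Epi (Abelian.image.ι w) := by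
        have : Epi (Abelian.factorThruImage w ≫ Abelian.image.ι w) := by
          rw [hfac]; exact hepiw
        exact epi_of_epi (Abelian.factorThruImage w) _
      have : IsIso (Abelian.image.ι w) := isIso_of_mono_of_epi _
      exact asIso (Abelian.image.ι w)
    -- the isomorphism `kernel h₂ ≅ kernel h₁`
    obtain ⟨lam, hlam⟩ := KernelFork.IsLimit.lift' hS'.fIsKernel (kernel.ι h₂ ≫ T.f)
      (by rw [Category.assoc, ← hh₂, kernel.condition])
    dsimp at hlam
    obtain ⟨mu, hmu⟩ := KernelFork.IsLimit.lift' hT.fIsKernel (kernel.ι h₁ ≫ S'.f)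
      (by rw [Category.assoc, ← hh₁, kernel.condition])
    dsimp at hmu
    have hlamh₁ : lam ≫ h₁ = 0 := by
      rw [hh₁, ← Category.assoc, hlam, Category.assoc, T.zero, comp_zero]
    have hmuh₂ : mu ≫ h₂ = 0 := by
      rw [hh₂, ← Category.assoc, hmu, Category.assoc, S'.zero, comp_zero]
    set α : kernel h₂ ⟶ kernel h₁ := kernel.lift h₁ lam hlamh₁ with hα
    set β : kernel h₁ ⟶ kernel h₂ := kernel.lift h₂ mu hmuh₂ with hβ
    have hαι : α ≫ kernel.ι h₁ = lam := kernel.lift_ι _ _ _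
    have hβι : β ≫ kernel.ι h₂ = mu := kernel.lift_ι _ _ _
    have hκ1 : α ≫ β = 𝟙 _ := by
      rw [← cancel_mono (kernel.ι h₂), ← cancel_mono T.f]
      simp only [Category.assoc, Category.id_comp]
      rw [reassoc_of% hβι, hmu, reassoc_of% hαι]
      exact hlam
    have hκ2 : β ≫ α = 𝟙 _ := by
      rw [← cancel_mono (kernel.ι h₁), ← cancel_mono S'.f]
      simp only [Category.assoc, Category.id_comp]
      rw [reassoc_of% hαι, hlam, reassoc_of% hβι]
      exact hmu
    have κ : kernel h₂ ≅ kernel h₁ := ⟨α, β, hκ1, hκ2⟩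
    -- apply the induction hypotheses
    obtain ⟨a₁, a₂, haab, hca₁, hca₂⟩ := iha (scKI h₂) (scKI_shortExact h₂) (Iso.refl _)
    obtain ⟨b₁, b₂, hbab, hcb₁, hcb₂⟩ := ihb (scKI w) (scKI_shortExact w) (Iso.refl _)
    dsimp [scKI] at hca₁ hca₂ hcb₁ hcb₂
    refine ⟨a₁ + b₁, a₂ + b₂, by omega, ?_, ?_⟩
    · -- Cnt S.X₁ (a₁ + b₁) via scKI h₁
      have c1 : Cnt χ S₀ (kernel h₁) a₁ := cnt_of_iso χ hχ hca₁ κ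
      have c2 : Cnt χ S₀ (Abelian.image h₁) b₁ := cnt_of_iso χ hχ hcb₁ iso1.symm
      have := Cnt.ses (scKI_shortExact h₁) c1 c2
      dsimp [scKI] at this
      exact this
    · -- Cnt S.X₃ (a₂ + b₂) via scIC h₂
      have c2 : Cnt χ S₀ (cokernel h₂) b₂ := cnt_of_iso χ hχ hcb₂ iso2
      have := Cnt.ses (scIC_shortExact h₂) hca₂ c2
      dsimp [scIC] at this
      exact this

end Split

end Count

section Phi

variable (χ : A → ℕ)

/-- The multiplicity of the `χ`-class of `S₀` in `Z`. -/
noncomputable def phi (S₀ Z : A) : ℕ := sSup {n | Cnt χ S₀ Z n}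

variable (hχ : IsAdditiveFn χ)

include hχ

lemma cnt_le_chi {S₀ : A} (h0 : χ S₀ ≠ 0) {Z : A} {n : ℕ} (h : Cnt χ S₀ Z n) : n ≤ χ Z := by
  have h1 := cnt_chi_le χ hχ h
  have h2 : n ≤ n * χ S₀ := Nat.le_mul_of_pos_right n (by omega)
  omega

lemma cnt_bddAbove {S₀ : A} (h0 : χ S₀ ≠ 0) (Z : A) : BddAbove {n | Cnt χ S₀ Z n} :=
  ⟨χ Z, fun _ hn => cnt_le_chi χ hχ h0 hn⟩

lemma phi_cnt {S₀ : A} (h0 : χ S₀ ≠ 0) (Z : A) : Cnt χ S₀ Z (phi χ S₀ Z) :=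
  Nat.sSup_mem ⟨0, Cnt.zero _⟩ (cnt_bddAbove χ hχ h0 Z)

lemma le_phi {S₀ : A} (h0 : χ S₀ ≠ 0) {Z : A} {n : ℕ} (h : Cnt χ S₀ Z n) :
    n ≤ phi χ S₀ Z :=
  le_csSup (cnt_bddAbove χ hχ h0 Z) h

lemma phi_le_chi {S₀ : A} (h0 : χ S₀ ≠ 0) (Z : A) : phi χ S₀ Z ≤ χ Z :=
  cnt_le_chi χ hχ h0 (phi_cnt χ hχ h0 Z)

lemma phi_mul_le {S₀ : A} (h0 : χ S₀ ≠ 0) (Z : A) : phi χ S₀ Z * χ S₀ ≤ χ Z :=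
  cnt_chi_le χ hχ (phi_cnt χ hχ h0 Z)

lemma phi_eq_zero_of_chi_zero {S₀ : A} (h0 : χ S₀ ≠ 0) {Z : A} (hZ : χ Z = 0) :
    phi χ S₀ Z = 0 :=
  Nat.le_zero.1 (by have := phi_le_chi χ hχ h0 Z; omega)

lemma phi_additive {S₀ : A} (hS₀ : ChiSimple χ S₀) : IsAdditiveFn (phi χ S₀) := by
  intro S hS
  have h0 := hS₀.1
  apply Nat.le_antisymm
  · obtain ⟨a, b, hn, ha, hb⟩ :=
      cnt_split χ hχ hS₀ (phi_cnt χ hχ h0 S.X₂) S hS (Iso.refl _)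
    have := le_phi χ hχ h0 ha
    have := le_phi χ hχ h0 hb
    omega
  · have := Cnt.ses hS (phi_cnt χ hχ h0 S.X₁) (phi_cnt χ hχ h0 S.X₃)
    exact le_phi χ hχ h0 this

lemma phi_self {S₀ : A} (hS₀ : ChiSimple χ S₀) : phi χ S₀ S₀ = 1 := by
  have h0 := hS₀.1
  have h1 : (1 : ℕ) ≤ phi χ S₀ S₀ := le_phi χ hχ h0 (Cnt.self _ (rel_refl χ hχ S₀))
  have h2 : phi χ S₀ S₀ * χ S₀ ≤ 1 * χ S₀ := by
    rw [one_mul]; exact phi_mul_le χ hχ h0 S₀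
  have := Nat.le_of_mul_le_mul_right h2 (by omega)
  omega

lemma phi_congr {S₀ T₀ : A} (h : Rel χ S₀ T₀) : phi χ S₀ = phi χ T₀ := by
  funext Z
  unfold phi
  congr 1
  ext n
  exact ⟨cnt_rel_transfer χ hχ h, cnt_rel_transfer χ hχ (rel_symm χ h)⟩

lemma rel_of_cnt_pos {S₀ : A} (hS₀ : ChiSimple χ S₀) {Z : A} {n : ℕ} (h : Cnt χ S₀ Z n) :
    1 ≤ n → ChiSimple χ Z → Rel χ S₀ Z := by
  induction h with
  | self Z hrel => exact fun _ _ => hrel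
  | zero Z => omega
  | ses hT ha hb iha ihb =>
    rename_i T a b
    intro hn hZ
    have h0 := hS₀.1
    rcases ses_dichotomy χ hχ hT hZ with ⟨h1, h2⟩ | ⟨h1, h2⟩
    · have ha0 : a = 0 := by
        have := cnt_chi_le χ hχ ha
        by_contra hne
        have : χ S₀ ≤ a * χ S₀ := Nat.le_mul_of_pos_left _ (by omega)
        omega
      have hX₃ : ChiSimple χ T.X₃ := chiSimple_of_rel χ hχ h2 hZ
      have := ihb (by omega) hX₃
      exact rel_trans χ hχ this (rel_symm χ h2)
    · have hb0 : b = 0 := by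
        have := cnt_chi_le χ hχ hb
        by_contra hne
        have : χ S₀ ≤ b * χ S₀ := Nat.le_mul_of_pos_left _ (by omega)
        omega
      have hX₁ : ChiSimple χ T.X₁ := chiSimple_of_rel χ hχ (rel_symm χ h1) hZ
      have := iha (by omega) hX₁
      exact rel_trans χ hχ this h1

lemma rel_of_phi_ne_zero {S₀ : A} (hS₀ : ChiSimple χ S₀) {Z : A} (hZ : ChiSimple χ Z)
    (h : phi χ S₀ Z ≠ 0) : Rel χ S₀ Z :=
  rel_of_cnt_pos χ hχ hS₀ (phi_cnt χ hχ hS₀.1 Z) (by omega) hZ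

lemma phi_simple_eq_zero {S₀ T : A} (hS₀ : ChiSimple χ S₀) (hT : ChiSimple χ T)
    (h : ¬ Rel χ S₀ T) : phi χ S₀ T = 0 := by
  by_contra hne
  exact h (rel_of_phi_ne_zero χ hχ hS₀ hT hne)

end Phi

section Decomp

lemma shortExact_mono_cokernel {Y Z : A} (i : Y ⟶ Z) [Mono i] :
    (ShortComplex.mk i (cokernel.π i) (cokernel.condition i)).ShortExact := by
  apply shortExact_of_isLimit _ (by dsimp; infer_instance)
  exact Abelian.monoIsKernelOfCokernel (CokernelCofork.ofπ (cokernel.π i)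
    (cokernel.condition i)) (cokernelIsCokernel i)

variable (χ : A → ℕ) (hχ : IsAdditiveFn χ)

include hχ

lemma exists_ses_of_not_simple {Z : A} (h0 : χ Z ≠ 0) (h : ¬ ChiSimple χ Z) :
    ∃ S : ShortComplex A, S.ShortExact ∧ S.X₂ = Z ∧
      0 < χ S.X₁ ∧ χ S.X₁ < χ Z ∧ 0 < χ S.X₃ ∧ χ S.X₃ < χ Z := by
  rw [ChiSimple] at h
  push_neg at h
  obtain ⟨Y, i, hi, hY0, hYne⟩ := h h0
  haveI := hi
  have hSE := shortExact_mono_cokernel i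
  have hadd := hχ _ hSE
  dsimp at hadd
  have hle : χ Y ≤ χ Z := chi_mono_le χ hχ i
  refine ⟨_, hSE, rfl, ?_, ?_, ?_, ?_⟩ <;> dsimp <;> omega

lemma cnt_mul_psi_le (ψ : A → ℕ) (hψ : IsAdditiveFn ψ) (hle : ∀ T, ψ T ≤ χ T)
    {S₀ Z : A} {n : ℕ} (h : Cnt χ S₀ Z n) : n * ψ S₀ ≤ ψ Z := by
  induction h with
  | self Z hrel => rw [const_of_rel χ hχ ψ hψ hle hrel, one_mul]
  | zero Z => simp
  | ses hS ha hb iha ihb =>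
    have := hψ _ hS
    rw [add_mul]
    omega

lemma phi_mul_psi_le (ψ : A → ℕ) (hψ : IsAdditiveFn ψ) (hle : ∀ T, ψ T ≤ χ T)
    {S₀ : A} (h0 : χ S₀ ≠ 0) (Z : A) : phi χ S₀ Z * ψ S₀ ≤ ψ Z :=
  cnt_mul_psi_le χ hχ ψ hψ hle (phi_cnt χ hχ h0 Z)

lemma vanish {S₀ : A} (hS₀ : ChiSimple χ S₀) (ψ : A → ℕ) (hψ : IsAdditiveFn ψ)
    (hle : ∀ T, ψ T ≤ phi χ S₀ T) (h0 : ψ S₀ = 0) : ∀ Z, ψ Z = 0 := by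
  have hS₀0 := hS₀.1
  have hleχ : ∀ T, ψ T ≤ χ T := fun T => (hle T).trans (phi_le_chi χ hχ hS₀0 T)
  suffices H : ∀ (n : ℕ) (Z : A), χ Z = n → ψ Z = 0 by
    intro Z; exact H (χ Z) Z rfl
  intro n
  induction n using Nat.strong_induction_on with
  | _ n IH =>
    intro Z hZn
    by_cases hz : χ Z = 0
    · have := hle Z
      rw [phi_eq_zero_of_chi_zero χ hχ hS₀0 hz] at this
      omega
    by_cases hsimp : ChiSimple χ Z
    · by_cases hphi : phi χ S₀ Z = 0
      · have := hle Z; omega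
      · have hrel : Rel χ S₀ Z := rel_of_phi_ne_zero χ hχ hS₀ hsimp hphi
        rw [← const_of_rel χ hχ ψ hψ hleχ hrel]
        exact h0
    · obtain ⟨S, hSE, hX₂, h1, h2, h3, h4⟩ := exists_ses_of_not_simple χ hχ hz hsimp
      have hadd := hψ _ hSE
      rw [hX₂] at hadd
      have e1 : ψ S.X₁ = 0 := IH (χ S.X₁) (by omega) _ rfl
      have e3 : ψ S.X₃ = 0 := IH (χ S.X₃) (by omega) _ rfl
      omega

lemma phi_irreducible {S₀ : A} (hS₀ : ChiSimple χ S₀) : IsIrreducibleAdd (phi χ S₀) := by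
  constructor
  · exact ⟨S₀, by rw [phi_self χ hχ hS₀]; omega⟩
  · intro α β hα hβ hsum
    have hleα : ∀ T, α T ≤ phi χ S₀ T := fun T => by have := hsum T; omega
    have hleβ : ∀ T, β T ≤ phi χ S₀ T := fun T => by have := hsum T; omega
    have hsum0 : α S₀ + β S₀ = 1 := by
      have := hsum S₀
      rw [phi_self χ hχ hS₀] at this
      omega
    rcases Nat.eq_zero_or_pos (α S₀) with h | h
    · exact Or.inl (vanish χ hχ hS₀ α hα hleα h)
    · exact Or.inr (vanish χ hχ hS₀ β hβ hleβ (by omega))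

end Decomp

section Main

/-- The multiplicity function: assigns to each irreducible additive function `ψ` the value
`χ S₀` if `ψ = phi χ S₀` for some `χ`-simple `S₀`, and `0` otherwise. -/
noncomputable def mfn (χ : A → ℕ)
    (ψ : {ψ : A → ℕ // IsAdditiveFn ψ ∧ IsIrreducibleAdd ψ}) : ℕ :=
  sSup {c | ∃ S₀ : A, ChiSimple χ S₀ ∧ ψ.1 = phi χ S₀ ∧ χ S₀ = c}

variable (χ : A → ℕ) (hχ : IsAdditiveFn χ)

lemma mfn_eq_zero (ψ : {ψ : A → ℕ // IsAdditiveFn ψ ∧ IsIrreducibleAdd ψ})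
    (h : ¬ ∃ S₀, ChiSimple χ S₀ ∧ ψ.1 = phi χ S₀) : mfn χ ψ = 0 := by
  unfold mfn
  have he : {c | ∃ S₀ : A, ChiSimple χ S₀ ∧ ψ.1 = phi χ S₀ ∧ χ S₀ = c} = ∅ := by
    ext c
    simp only [Set.mem_setOf_eq, Set.mem_empty_iff_false, iff_false]
    rintro ⟨S₀, h1, h2, _⟩
    exact h ⟨S₀, h1, h2⟩
  rw [he, csSup_empty]
  rfl

lemma mfn_ne_zero (ψ : {ψ : A → ℕ // IsAdditiveFn ψ ∧ IsIrreducibleAdd ψ})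
    (h : mfn χ ψ ≠ 0) : ∃ S₀, ChiSimple χ S₀ ∧ ψ.1 = phi χ S₀ := by
  by_contra hc
  exact h (mfn_eq_zero χ ψ hc)

include hχ

lemma phi_eq_phi_iff {S₀ T₀ : A} (hS₀ : ChiSimple χ S₀) (hT₀ : ChiSimple χ T₀) :
    phi χ S₀ = phi χ T₀ ↔ Rel χ S₀ T₀ := by
  constructor
  · intro h
    have h1 : phi χ S₀ T₀ = 1 := by rw [h]; exact phi_self χ hχ hT₀
    exact rel_of_phi_ne_zero χ hχ hS₀ hT₀ (by omega)
  · exact phi_congr χ hχ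

lemma mfn_phi {S₀ : A} (hS₀ : ChiSimple χ S₀)
    (ψ : {ψ : A → ℕ // IsAdditiveFn ψ ∧ IsIrreducibleAdd ψ}) (hψ : ψ.1 = phi χ S₀) :
    mfn χ ψ = χ S₀ := by
  unfold mfn
  have he : {c | ∃ T₀ : A, ChiSimple χ T₀ ∧ ψ.1 = phi χ T₀ ∧ χ T₀ = c} = {χ S₀} := by
    ext c
    simp only [Set.mem_setOf_eq, Set.mem_singleton_iff]
    constructor
    · rintro ⟨T₀, hT₀, hpsi, rfl⟩
      have heq : phi χ S₀ = phi χ T₀ := by rw [← hψ, hpsi]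
      have hrel := (phi_eq_phi_iff χ hχ hS₀ hT₀).1 heq
      exact (chi_of_rel χ hχ hrel).symm
    · rintro rfl; exact ⟨S₀, hS₀, hψ, rfl⟩
  rw [he, csSup_singleton]

lemma main_sum : ∀ (n : ℕ) (Z : A), χ Z = n →
    (Function.support fun ψ : {ψ : A → ℕ // IsAdditiveFn ψ ∧ IsIrreducibleAdd ψ} =>
      mfn χ ψ * ψ.1 Z).Finite ∧
    χ Z = ∑ᶠ ψ : {ψ : A → ℕ // IsAdditiveFn ψ ∧ IsIrreducibleAdd ψ}, mfn χ ψ * ψ.1 Z := by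
  intro n
  induction n using Nat.strong_induction_on with
  | _ n IH =>
  intro Z hZ
  by_cases h0 : χ Z = 0
  · have hzero : ∀ ψ : {ψ : A → ℕ // IsAdditiveFn ψ ∧ IsIrreducibleAdd ψ},
        mfn χ ψ * ψ.1 Z = 0 := by
      intro ψ
      by_cases hm : mfn χ ψ = 0
      · rw [hm, zero_mul]
      · obtain ⟨S₀, hS₀, hpsi⟩ := mfn_ne_zero χ ψ hm
        rw [hpsi, phi_eq_zero_of_chi_zero χ hχ hS₀.1 h0, mul_zero]
    constructor
    · apply Set.Finite.subset (Set.finite_empty)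
      intro ψ hψ
      exact absurd (hzero ψ) hψ
    · rw [finsum_eq_zero_of_forall_eq_zero hzero]
      exact h0
  by_cases hsimp : ChiSimple χ Z
  · set ψ₀ : {ψ : A → ℕ // IsAdditiveFn ψ ∧ IsIrreducibleAdd ψ} :=
      ⟨phi χ Z, phi_additive χ hχ hsimp, phi_irreducible χ hχ hsimp⟩ with hψ₀
    have hkey : ∀ ψ : {ψ : A → ℕ // IsAdditiveFn ψ ∧ IsIrreducibleAdd ψ}, ψ ≠ ψ₀ →
        mfn χ ψ * ψ.1 Z = 0 := by
      intro ψ hne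
      by_cases hm : mfn χ ψ = 0
      · rw [hm, zero_mul]
      obtain ⟨T₀, hT₀, hpsi⟩ := mfn_ne_zero χ ψ hm
      by_cases hz : ψ.1 Z = 0
      · rw [hz, mul_zero]
      exfalso
      have hphine : phi χ T₀ Z ≠ 0 := by rw [← hpsi]; exact hz
      have hrel : Rel χ T₀ Z := rel_of_phi_ne_zero χ hχ hT₀ hsimp hphine
      exact hne (Subtype.ext (by rw [hpsi, phi_congr χ hχ hrel]))
    constructor
    · apply Set.Finite.subset (Set.finite_singleton ψ₀)
      intro ψ hψ
      by_contra hne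
      exact hψ (hkey ψ hne)
    · rw [finsum_eq_single _ ψ₀ hkey]
      have h1 : ψ₀.1 Z = 1 := phi_self χ hχ hsimp
      rw [h1, mul_one, mfn_phi χ hχ hsimp ψ₀ rfl]
  · obtain ⟨S, hSE, hX₂, h1, h2, h3, h4⟩ := exists_ses_of_not_simple χ hχ h0 hsimp
    have hadd := hχ _ hSE
    rw [hX₂] at hadd
    obtain ⟨hf1, hs1⟩ := IH (χ S.X₁) (by omega) S.X₁ rfl
    obtain ⟨hf3, hs3⟩ := IH (χ S.X₃) (by omega) S.X₃ rfl
    have hptw : ∀ ψ : {ψ : A → ℕ // IsAdditiveFn ψ ∧ IsIrreducibleAdd ψ},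
        mfn χ ψ * ψ.1 Z = mfn χ ψ * ψ.1 S.X₁ + mfn χ ψ * ψ.1 S.X₃ := by
      intro ψ
      have hadd' := ψ.2.1 _ hSE
      rw [hX₂] at hadd'
      rw [hadd', mul_add]
    constructor
    · apply Set.Finite.subset (hf1.union hf3)
      intro ψ hψ
      rw [Function.mem_support, hptw ψ] at hψ
      simp only [Set.mem_union, Function.mem_support]
      by_contra hc
      push_neg at hc
      exact hψ (by omega)
    · calc χ Z = χ S.X₁ + χ S.X₃ := by omega
        _ = (∑ᶠ ψ : {ψ : A → ℕ // IsAdditiveFn ψ ∧ IsIrreducibleAdd ψ}, mfn χ ψ * ψ.1 S.X₁)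
            + (∑ᶠ ψ : {ψ : A → ℕ // IsAdditiveFn ψ ∧ IsIrreducibleAdd ψ},
                mfn χ ψ * ψ.1 S.X₃) := by rw [← hs1, ← hs3]
        _ = ∑ᶠ ψ : {ψ : A → ℕ // IsAdditiveFn ψ ∧ IsIrreducibleAdd ψ},
              (mfn χ ψ * ψ.1 S.X₁ + mfn χ ψ * ψ.1 S.X₃) := (finsum_add_distrib hf1 hf3).symm
        _ = ∑ᶠ ψ : {ψ : A → ℕ // IsAdditiveFn ψ ∧ IsIrreducibleAdd ψ}, mfn χ ψ * ψ.1 Z :=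
              finsum_congr fun ψ => (hptw ψ).symm

lemma uniq_m (m' : {ψ : A → ℕ // IsAdditiveFn ψ ∧ IsIrreducibleAdd ψ} → ℕ)
    (hfin' : ∀ X : A, (Function.support fun ψ : {ψ : A → ℕ // IsAdditiveFn ψ ∧
        IsIrreducibleAdd ψ} => m' ψ * ψ.1 X).Finite)
    (hsum' : ∀ X : A, χ X = ∑ᶠ ψ : {ψ : A → ℕ // IsAdditiveFn ψ ∧ IsIrreducibleAdd ψ},
        m' ψ * ψ.1 X) :
    m' = mfn χ := by
  have hbound : ∀ (ψ : {ψ : A → ℕ // IsAdditiveFn ψ ∧ IsIrreducibleAdd ψ}) (X : A),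
      m' ψ * ψ.1 X ≤ χ X := by
    intro ψ X
    rw [hsum' X]
    exact single_le_finsum ψ (hfin' X) (fun _ => Nat.zero_le _)
  have hform : ∀ ψ : {ψ : A → ℕ // IsAdditiveFn ψ ∧ IsIrreducibleAdd ψ}, m' ψ ≠ 0 →
      ∃ S₀, ChiSimple χ S₀ ∧ ψ.1 = phi χ S₀ := by
    intro ψ hm
    have hψle : ∀ X, ψ.1 X ≤ χ X := by
      intro X
      have hb := hbound ψ X
      have hb2 : ψ.1 X ≤ m' ψ * ψ.1 X := Nat.le_mul_of_pos_left _ (by omega)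
      omega
    obtain ⟨X₁, hX₁⟩ := ψ.2.2.1
    set s : Set ℕ := {c | ∃ X : A, ψ.1 X ≠ 0 ∧ χ X = c} with hs
    have hsne : s.Nonempty := ⟨χ X₁, X₁, hX₁, rfl⟩
    obtain ⟨X₀, hX₀ne, hX₀c⟩ := Nat.sInf_mem hsne
    have hmin : ∀ Y : A, ψ.1 Y ≠ 0 → sInf s ≤ χ Y := fun Y hY => Nat.sInf_le ⟨Y, hY, rfl⟩
    have hX₀simple : ChiSimple χ X₀ := by
      by_contra hns
      have hχX₀ : χ X₀ ≠ 0 := by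
        intro hzero
        have := hψle X₀
        omega
      obtain ⟨S, hSE, hX₂, h1, h2, h3, h4⟩ := exists_ses_of_not_simple χ hχ hχX₀ hns
      have hadd := ψ.2.1 _ hSE
      rw [hX₂] at hadd
      have c1 : ψ.1 S.X₁ = 0 := by
        by_contra hne
        have := hmin _ hne
        omega
      have c3 : ψ.1 S.X₃ = 0 := by
        by_contra hne
        have := hmin _ hne
        omega
      omega
    have hlow : ∀ Z : A, phi χ X₀ Z * ψ.1 X₀ ≤ ψ.1 Z :=
      phi_mul_psi_le χ hχ ψ.1 ψ.2.1 hψle hX₀simple.1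
    have hαadd : IsAdditiveFn (fun Z => phi χ X₀ Z * ψ.1 X₀) := by
      intro S hS
      have := phi_additive χ hχ hX₀simple _ hS
      dsimp only
      rw [this, add_mul]
    have hβadd : IsAdditiveFn (fun Z => ψ.1 Z - phi χ X₀ Z * ψ.1 X₀) := by
      intro S hS
      have e1 := ψ.2.1 _ hS
      have e2 := phi_additive χ hχ hX₀simple _ hS
      have e2' : phi χ X₀ S.X₂ * ψ.1 X₀
          = phi χ X₀ S.X₁ * ψ.1 X₀ + phi χ X₀ S.X₃ * ψ.1 X₀ := by rw [e2, add_mul]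
      have l1 := hlow S.X₁
      have l3 := hlow S.X₃
      show ψ.1 S.X₂ - phi χ X₀ S.X₂ * ψ.1 X₀
        = (ψ.1 S.X₁ - phi χ X₀ S.X₁ * ψ.1 X₀) + (ψ.1 S.X₃ - phi χ X₀ S.X₃ * ψ.1 X₀)
      omega
    have hdecomp : ∀ X, ψ.1 X = (fun Z => phi χ X₀ Z * ψ.1 X₀) X
        + (fun Z => ψ.1 Z - phi χ X₀ Z * ψ.1 X₀) X := by
      intro X
      have := hlow X
      show ψ.1 X = phi χ X₀ X * ψ.1 X₀ + (ψ.1 X - phi χ X₀ X * ψ.1 X₀)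
      omega
    rcases ψ.2.2.2 _ _ hαadd hβadd hdecomp with hall | hall
    · exfalso
      have hz := hall X₀
      rw [phi_self χ hχ hX₀simple, one_mul] at hz
      exact hX₀ne hz
    · have hψeq : ∀ Z, ψ.1 Z = phi χ X₀ Z * ψ.1 X₀ := by
        intro Z
        have h5 := hall Z
        have := hlow Z
        omega
      have hc1 : ψ.1 X₀ = 1 := by
        by_contra hc
        have hc2 : 2 ≤ ψ.1 X₀ := by omega
        obtain ⟨d, hd⟩ : ∃ d, ψ.1 X₀ = d + 2 := ⟨ψ.1 X₀ - 2, by omega⟩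
        rcases ψ.2.2.2 (phi χ X₀) (fun Z => (d + 1) * phi χ X₀ Z)
          (phi_additive χ hχ hX₀simple)
          (by
            intro S hS
            dsimp only
            rw [phi_additive χ hχ hX₀simple _ hS, mul_add])
          (by
            intro X
            rw [hψeq X, hd]
            ring) with h' | h'
        · have := h' X₀
          rw [phi_self χ hχ hX₀simple] at this
          omega
        · have := h' X₀
          rw [phi_self χ hχ hX₀simple, mul_one] at this
          omega
      exact ⟨X₀, hX₀simple, funext fun Z => by rw [hψeq Z, hc1, mul_one]⟩
  have heval : ∀ (S₀ : A), ChiSimple χ S₀ →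
      ∀ ψ : {ψ : A → ℕ // IsAdditiveFn ψ ∧ IsIrreducibleAdd ψ}, ψ.1 = phi χ S₀ →
      m' ψ = χ S₀ := by
    intro S₀ hS₀ ψ hψ
    have hX := hsum' S₀
    have hkey : ∀ ψ' : {ψ : A → ℕ // IsAdditiveFn ψ ∧ IsIrreducibleAdd ψ}, ψ' ≠ ψ →
        m' ψ' * ψ'.1 S₀ = 0 := by
      intro ψ' hne
      by_cases hm : m' ψ' = 0
      · rw [hm, zero_mul]
      obtain ⟨T₀, hT₀, hform'⟩ := hform ψ' hm
      by_cases hz : ψ'.1 S₀ = 0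
      · rw [hz, mul_zero]
      exfalso
      have hphine : phi χ T₀ S₀ ≠ 0 := by rw [← hform']; exact hz
      have hrel : Rel χ T₀ S₀ := rel_of_phi_ne_zero χ hχ hT₀ hS₀ hphine
      refine hne (Subtype.ext ?_)
      rw [hform', hψ, phi_congr χ hχ hrel]
    rw [finsum_eq_single _ ψ hkey, hψ, phi_self χ hχ hS₀, mul_one] at hX
    exact hX.symm
  funext ψ
  by_cases hex : ∃ S₀, ChiSimple χ S₀ ∧ ψ.1 = phi χ S₀
  · obtain ⟨S₀, hS₀, hψ⟩ := hex
    rw [heval S₀ hS₀ ψ hψ, mfn_phi χ hχ hS₀ ψ hψ]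
  · rw [mfn_eq_zero χ ψ hex]
    by_contra hm
    exact hex (hform ψ hm)

end Main

end AddFnProof

/-- Every additive function on an (essentially small) abelian category
can be written uniquely as a locally finite sum of irreducible additive functions;
the decomposition is recorded by the multiplicity function `m` on the set of
irreducible additive functions.  Local finiteness: for each object `X` only finitely
many summands are non-zero at `X`. -/
theorem additive_eq_unique_locally_finite_sum_of_irreducibles
    {A : Type u} [Category.{v} A] [EssentiallySmall.{v} A] [Abelian A]
    (χ : A → ℕ) (hχ : IsAdditiveFn χ) :
    ∃! m : {ψ : A → ℕ // IsAdditiveFn ψ ∧ IsIrreducibleAdd ψ} → ℕ,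
      (∀ X : A, (Function.support fun ψ : {ψ : A → ℕ // IsAdditiveFn ψ ∧ IsIrreducibleAdd ψ} =>
          m ψ * ψ.1 X).Finite) ∧
      ∀ X : A, χ X = ∑ᶠ ψ : {ψ : A → ℕ // IsAdditiveFn ψ ∧ IsIrreducibleAdd ψ}, m ψ * ψ.1 X := by
  refine ⟨AddFnProof.mfn χ, ⟨fun X => (AddFnProof.main_sum χ hχ (χ X) X rfl).1,
    fun X => (AddFnProof.main_sum χ hχ (χ X) X rfl).2⟩, ?_⟩
  rintro m' ⟨hfin', hsum'⟩
  exact AddFnProof.uniq_m χ hχ m' hfin' hsum'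
end

section
/- Let A be an essentially small abelian category, X ∈ A, and n ≥ 0. Then the set U_{X,n} = {χ ∈ Sp A : χ(X) ≤ n} is closed in the Ziegler topology on the space Sp A of irreducible additive functions. -/
open CategoryTheory CategoryTheory.Limits

universe v u

/-- The space `Sp A` of irreducible additive functions on `A`. -/
def SpFn (A : Type u) [Category.{v} A] [Abelian A] :=
  {χ : A → ℕ // IsAdditiveFn χ ∧ IsIrreducibleAdd χ}

/-- The Ziegler topology on `Sp A`, generated by the basic open sets
`(Y) = {χ | χ Y ≠ 0}` for `Y` an object of `A`. -/
instance SpFn.topologicalSpace (A : Type u) [Category.{v} A] [Abelian A] :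
    TopologicalSpace (SpFn A) :=
  TopologicalSpace.generateFrom {U | ∃ Y : A, U = {χ : SpFn A | χ.1 Y ≠ 0}}

section Aux

variable {A : Type u} [Category.{v} A] [Abelian A]

/-- The short exact sequence `Y ↪ X ↠ coker` associated to a mono. -/
lemma shortExact_of_mono {Y X : A} (f : Y ⟶ X) [Mono f] :
    (ShortComplex.mk f (cokernel.π f) (cokernel.condition f)).ShortExact := by
  exact ShortComplex.ShortExact.mk'
    (ShortComplex.exact_of_g_is_cokernel _ (cokernelIsCokernel f))
    inferInstance inferInstance

lemma IsAdditiveFn.zero {χ : A → ℕ} (hχ : IsAdditiveFn χ) {Z : A} (hZ : IsZero Z) :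
    χ Z = 0 := by
  have w : 𝟙 Z ≫ 𝟙 Z = 0 := hZ.eq_of_src _ _
  have hse : (ShortComplex.mk (𝟙 Z) (𝟙 Z) w).ShortExact :=
    ShortComplex.ShortExact.mk' (ShortComplex.exact_of_isZero_X₂ _ hZ)
      inferInstance inferInstance
  have := hχ _ hse
  simp only [ShortComplex.mk] at this
  omega

lemma IsAdditiveFn.of_mono {χ : A → ℕ} (hχ : IsAdditiveFn χ) {Y X : A} (f : Y ⟶ X) [Mono f] :
    χ X = χ Y + χ (cokernel f) :=
  hχ _ (shortExact_of_mono f)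

/-- `HasFilt X Qs` : `X` has a filtration whose successive subquotients are the
entries of the list `Qs`. -/
def HasFilt : A → List A → Prop
  | X, [] => IsZero X
  | X, Q :: Qs => ∃ (Y : A) (f : Y ⟶ X) (g : X ⟶ Q) (w : f ≫ g = 0),
      (ShortComplex.mk f g w).ShortExact ∧ HasFilt Y Qs

open ZeroObject in
lemma hasFilt_single (X : A) : HasFilt X [X] := by
  refine ⟨0, 0, 𝟙 X, by simp, ?_, isZero_zero A⟩
  have : Mono (0 : (0 : A) ⟶ X) := ⟨fun u v _ => (isZero_zero A).eq_of_tgt u v⟩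
  exact ShortComplex.ShortExact.mk'
    ((ShortComplex.exact_iff_mono _ rfl).2 inferInstance) this inferInstance

lemma HasFilt.sum {χ : A → ℕ} (hχ : IsAdditiveFn χ) :
    ∀ (Qs : List A) (X : A), HasFilt X Qs → χ X = (Qs.map χ).sum := by
  intro Qs
  induction Qs with
  | nil => intro X hX; simpa using hχ.zero hX
  | cons Q Qs ih =>
    rintro X ⟨Y, f, g, w, hse, hY⟩
    have := hχ _ hse
    simp only [ShortComplex.mk] at this
    rw [List.map_cons, List.sum_cons, this, ih Y hY]
    omega

/-- Transport a filtration along an isomorphism. -/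
lemma HasFilt.of_iso : ∀ (Qs : List A) {X X' : A}, (X ≅ X') → HasFilt X Qs → HasFilt X' Qs := by
  intro Qs
  cases Qs with
  | nil => intro X X' e hX; exact (show IsZero X from hX).of_iso e.symm
  | cons Q Qs =>
    rintro X X' e ⟨Y, f, g, w, hse, hY⟩
    have hm : Mono f := hse.mono_f
    have he : Epi g := hse.epi_g
    refine ⟨Y, f ≫ e.hom, e.inv ≫ g, by simp [w], ?_, hY⟩
    let φ : ShortComplex.mk f g w ⟶
        ShortComplex.mk (f ≫ e.hom) (e.inv ≫ g) (by simp [w]) :=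
      { τ₁ := 𝟙 Y, τ₂ := e.hom, τ₃ := 𝟙 Q,
        comm₁₂ := by simp, comm₂₃ := by simp }
    have : Epi φ.τ₁ := show Epi (𝟙 Y) by infer_instance
    have : IsIso φ.τ₂ := show IsIso e.hom by infer_instance
    have : Mono φ.τ₃ := show Mono (𝟙 Q) by infer_instance
    refine ShortComplex.ShortExact.mk'
      ((ShortComplex.exact_iff_of_epi_of_isIso_of_mono φ).1 hse.exact) ?_ ?_
    · exact mono_comp _ _
    · exact epi_comp _ _

/-- Concatenation of filtrations along a short exact sequence. -/
lemma HasFilt.concat :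
    ∀ (Rs : List A) (S : ShortComplex A), S.ShortExact →
      ∀ (Qs : List A), HasFilt S.X₁ Qs → HasFilt S.X₃ Rs → HasFilt S.X₂ (Rs ++ Qs) := by
  intro Rs
  induction Rs with
  | nil =>
    intro S hse Qs hY hZ
    have hm : Mono S.f := hse.mono_f
    have hg : S.g = 0 := hZ.eq_of_tgt _ _
    have he : Epi S.f := (ShortComplex.exact_iff_epi _ hg).1 hse.exact
    have : IsIso S.f := isIso_of_mono_of_epi _
    exact HasFilt.of_iso Qs (asIso S.f) hY
  | cons R Rs ih =>
    rintro S hse Qs hY ⟨Z₁, u, v, w2, hse2, hZ₁⟩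
    have : Mono u := hse2.mono_f
    have : Epi v := hse2.epi_g
    have : Epi S.g := hse.epi_g
    have : Mono S.f := hse.mono_f
    -- X₁ is the preimage of Z₁ in X₂, as a pullback
    let P : A := pullback S.g u
    let fst : P ⟶ S.X₂ := pullback.fst S.g u
    let snd : P ⟶ Z₁ := pullback.snd S.g u
    have hfst : Mono fst := inferInstance
    have hsnd : Epi snd := inferInstance
    -- the inner short exact sequence  X₁ ↪ P ↠ Z₁
    have hl0 : S.f ≫ S.g = 0 ≫ u := by simp [S.zero]
    let l : S.X₁ ⟶ P := pullback.lift S.f 0 hl0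
    have hlf : l ≫ fst = S.f := pullback.lift_fst _ _ _
    have hls : l ≫ snd = 0 := pullback.lift_snd _ _ _
    have hml : Mono l := by
      have : Mono (l ≫ fst) := by rw [hlf]; infer_instance
      exact mono_of_mono l fst
    have hinner : (ShortComplex.mk l snd hls).ShortExact := by
      refine ShortComplex.ShortExact.mk' ?_ hml hsnd
      apply ShortComplex.exact_of_f_is_kernel
      refine KernelFork.IsLimit.ofι' l hls (fun {T} k hk => ?_)
      · have hk' : (k ≫ fst) ≫ S.g = 0 := by
          rw [Category.assoc, pullback.condition]
          rw [← Category.assoc, hk, zero_comp]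
        obtain ⟨t, ht⟩ := KernelFork.IsLimit.lift' hse.fIsKernel (k ≫ fst) hk'
        refine ⟨t, ?_⟩
        apply pullback.hom_ext
        · rw [Category.assoc, hlf]; exact ht
        · rw [Category.assoc, hls, comp_zero, hk]
    -- the outer short exact sequence  P ↪ X₂ ↠ R
    have wout : fst ≫ S.g ≫ v = 0 := by
      rw [← Category.assoc, pullback.condition, Category.assoc, w2, comp_zero]
    have houter : (ShortComplex.mk fst (S.g ≫ v) wout).ShortExact := by
      refine ShortComplex.ShortExact.mk' ?_ hfst (epi_comp _ _)
      apply ShortComplex.exact_of_f_is_kernel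
      refine KernelFork.IsLimit.ofι' fst wout (fun {T} k hk => ?_)
      · have hk' : (k ≫ S.g) ≫ v = 0 := by rw [Category.assoc]; exact hk
        obtain ⟨t, ht⟩ := KernelFork.IsLimit.lift' hse2.fIsKernel (k ≫ S.g) hk'
        exact ⟨pullback.lift k t ht.symm, pullback.lift_fst _ _ _⟩
    have hP : HasFilt P (Rs ++ Qs) := ih (ShortComplex.mk l snd hls) hinner Qs hY hZ₁
    exact ⟨P, fst, S.g ≫ v, wout, houter, hP⟩

/-- Splitting a filtration along a short exact sequence, keeping control of the
number of `χ`-nonzero subquotients. -/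
lemma HasFilt.split {χ : A → ℕ} (hχ : IsAdditiveFn χ) :
    ∀ (Qs : List A) (S : ShortComplex A), S.ShortExact → HasFilt S.X₂ Qs →
      ∃ (QsY QsZ : List A), HasFilt S.X₁ QsY ∧ HasFilt S.X₃ QsZ ∧
        Qs.countP (fun Q => χ Q != 0) ≤
          QsY.countP (fun Q => χ Q != 0) + QsZ.countP (fun Q => χ Q != 0) := by
  intro Qs
  induction Qs with
  | nil =>
    intro S hse hX
    have : Mono S.f := hse.mono_f
    have : Epi S.g := hse.epi_g
    have hX' : IsZero S.X₂ := hX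
    refine ⟨[], [], ?_, ?_, by simp⟩
    · show IsZero S.X₁
      rw [IsZero.iff_id_eq_zero, ← cancel_mono S.f, Category.id_comp, Limits.zero_comp,
        hX'.eq_of_tgt S.f 0]
    · show IsZero S.X₃
      rw [IsZero.iff_id_eq_zero, ← cancel_epi S.g, Category.comp_id, Limits.comp_zero,
        hX'.eq_of_src S.g 0]
  | cons Q Qs ih =>
    rintro S hse ⟨X', m, q, wq, hseq, hX'⟩
    have : Mono m := hseq.mono_f
    have : Mono S.f := hse.mono_f
    have : Epi S.g := hse.epi_g
    let k : X' ⟶ S.X₃ := m ≫ S.g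
    -- inner SES :  ker k ↪ X' ↠ im k
    have wa : kernel.ι k ≫ factorThruImage k = 0 := by
      rw [← cancel_mono (image.ι k), Category.assoc, image.fac, zero_comp,
        kernel.condition]
    have hsea : (ShortComplex.mk (kernel.ι k) (factorThruImage k) wa).ShortExact := by
      refine ShortComplex.ShortExact.mk' ?_ inferInstance inferInstance
      apply ShortComplex.exact_of_f_is_kernel
      refine KernelFork.IsLimit.ofι' _ wa (fun {T} t ht => ?_)
      · have htk : t ≫ k = 0 := by
          rw [← image.fac k, ← Category.assoc, ht, zero_comp]
        exact ⟨kernel.lift k t htk, kernel.lift_ι _ _ _⟩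
    obtain ⟨QsY', QsZ', hY', hZ', hcount⟩ := ih _ hsea hX'
    -- the mono  ker k ↪ X₁
    have hlk : (kernel.ι k ≫ m) ≫ S.g = 0 := by
      rw [Category.assoc]; exact kernel.condition k
    obtain ⟨l, hl⟩ := KernelFork.IsLimit.lift' hse.fIsKernel (kernel.ι k ≫ m) hlk
    have hml : Mono l := by
      have : Mono (l ≫ S.f) := by
        rw [show l ≫ S.f = kernel.ι k ≫ m from hl]; exact mono_comp _ _
      exact mono_of_mono l S.f
    have hY : HasFilt S.X₁ (cokernel l :: QsY') :=
      ⟨_, l, cokernel.π l, cokernel.condition l, shortExact_of_mono l, hY'⟩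
    have hZ : HasFilt S.X₃ (cokernel (image.ι k) :: QsZ') :=
      ⟨_, image.ι k, cokernel.π _, cokernel.condition _, shortExact_of_mono _, hZ'⟩
    refine ⟨_, _, hY, hZ, ?_⟩
    -- the χ-arithmetic
    have e1 : χ S.X₂ = χ S.X₁ + χ S.X₃ := hχ _ hse
    have e2 : χ S.X₂ = χ X' + χ Q := hχ _ hseq
    have e3 : χ X' = χ (kernel k) + χ (image k) := hχ _ hsea
    have e4 : χ S.X₁ = χ (kernel k) + χ (cokernel l) := hχ.of_mono l
    have e5 : χ S.X₃ = χ (image k) + χ (cokernel (image.ι k)) := hχ.of_mono (image.ι k)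
    have eQ : χ Q = χ (cokernel l) + χ (cokernel (image.ι k)) := by omega
    simp only [List.countP_cons]
    by_cases hQ : χ Q = 0
    · simp only [hQ]; simp; omega
    · have : χ (cokernel l) ≠ 0 ∨ χ (cokernel (image.ι k)) ≠ 0 := by omega
      rcases this with h | h
      · simp only [bne_iff_ne, ne_eq, hQ, h, not_false_eq_true, if_true]; omega
      · simp only [bne_iff_ne, ne_eq, hQ, h, not_false_eq_true, if_true]; omega

/-- The number of `χ`-nonzero subquotients in the best filtration of `X`. -/
noncomputable def Lfun (χ : A → ℕ) (X : A) : ℕ :=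
  sSup {n | ∃ Qs : List A, HasFilt X Qs ∧ Qs.countP (fun Q => χ Q != 0) = n}

lemma count_le_sum (χ : A → ℕ) :
    ∀ Qs : List A, Qs.countP (fun Q => χ Q != 0) ≤ (Qs.map χ).sum := by
  intro Qs
  induction Qs with
  | nil => simp
  | cons Q Qs ih =>
    simp only [List.countP_cons, List.map_cons, List.sum_cons]
    by_cases hQ : χ Q = 0
    · simp [hQ]; omega
    · simp [bne_iff_ne, hQ]; omega

section
variable {χ : A → ℕ} (hχ : IsAdditiveFn χ)
include hχ

lemma Lfun_spec (X : A) :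
    Lfun χ X ∈ {n | ∃ Qs : List A, HasFilt X Qs ∧ Qs.countP (fun Q => χ Q != 0) = n} := by
  apply Nat.sSup_mem
  · exact ⟨_, [X], hasFilt_single X, rfl⟩
  · refine ⟨χ X, fun n hn => ?_⟩
    obtain ⟨Qs, hQs, rfl⟩ := hn
    rw [HasFilt.sum hχ Qs X hQs]
    exact count_le_sum χ Qs

lemma le_Lfun {X : A} {Qs : List A} (hQs : HasFilt X Qs) :
    Qs.countP (fun Q => χ Q != 0) ≤ Lfun χ X := by
  apply le_csSup
  · refine ⟨χ X, fun n hn => ?_⟩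
    obtain ⟨Qs', hQs', rfl⟩ := hn
    rw [HasFilt.sum hχ Qs' X hQs']
    exact count_le_sum χ Qs'
  · exact ⟨Qs, hQs, rfl⟩

lemma Lfun_le (X : A) : Lfun χ X ≤ χ X := by
  obtain ⟨Qs, hQs, hc⟩ := Lfun_spec hχ X
  rw [← hc, HasFilt.sum hχ Qs X hQs]
  exact count_le_sum χ Qs

lemma Lfun_additive : IsAdditiveFn (Lfun χ) := by
  intro S hse
  refine le_antisymm ?_ ?_
  · obtain ⟨Qs, hQs, hc⟩ := Lfun_spec hχ S.X₂
    obtain ⟨QsY, QsZ, hY, hZ, hcount⟩ := HasFilt.split hχ Qs S hse hQs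
    calc Lfun χ S.X₂ = Qs.countP (fun Q => χ Q != 0) := hc.symm
      _ ≤ QsY.countP (fun Q => χ Q != 0) + QsZ.countP (fun Q => χ Q != 0) := hcount
      _ ≤ Lfun χ S.X₁ + Lfun χ S.X₃ := Nat.add_le_add (le_Lfun hχ hY) (le_Lfun hχ hZ)
  · obtain ⟨Qs, hQs, hcQ⟩ := Lfun_spec hχ S.X₁
    obtain ⟨Rs, hRs, hcR⟩ := Lfun_spec hχ S.X₃
    have : HasFilt S.X₂ (Rs ++ Qs) := HasFilt.concat Rs S hse Qs hQs hRs
    have h := le_Lfun hχ this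
    rwa [List.countP_append, hcQ, hcR, Nat.add_comm] at h

lemma eq_Lfun (hirr : IsIrreducibleAdd χ) (X : A) : χ X = Lfun χ X := by
  have hadd : IsAdditiveFn (Lfun χ) := Lfun_additive hχ
  have hψ : IsAdditiveFn (fun X => χ X - Lfun χ X) := by
    intro S hS
    have h1 := hχ _ hS
    have h2 := hadd _ hS
    have l1 := Lfun_le hχ S.X₁
    have l2 := Lfun_le hχ S.X₃
    simp only
    omega
  have hdec : ∀ X : A, χ X = Lfun χ X + (χ X - Lfun χ X) := by
    intro X; have := Lfun_le hχ X; omega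
  rcases hirr.2 _ _ hadd hψ hdec with h | h
  · exfalso
    obtain ⟨X₀, hX₀⟩ := hirr.1
    have : ([X₀].countP (fun Q => χ Q != 0)) ≤ Lfun χ X₀ := le_Lfun hχ (hasFilt_single X₀)
    have hc : ([X₀].countP (fun Q => χ Q != 0)) = 1 := by
      simp [List.countP_cons, bne_iff_ne, hX₀]
    rw [hc] at this
    have := h X₀
    omega
  · have := h X
    have := Lfun_le hχ X
    omega

end

lemma count_le_sum' (χ χ' : A → ℕ) :
    ∀ Qs : List A, (∀ Q ∈ Qs, χ Q ≠ 0 → χ' Q ≠ 0) →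
      Qs.countP (fun Q => χ Q != 0) ≤ (Qs.map χ').sum := by
  intro Qs
  induction Qs with
  | nil => simp
  | cons Q Qs ih =>
    intro h
    simp only [List.countP_cons, List.map_cons, List.sum_cons]
    have hQs := ih (fun Q hQ => h Q (List.mem_cons_of_mem _ hQ))
    by_cases hQ : χ Q = 0
    · simp [hQ]; omega
    · have : χ' Q ≠ 0 := h Q List.mem_cons_self hQ
      simp [bne_iff_ne, hQ]
      omega

lemma isOpen_listInter (l : List A) :
    IsOpen {χ' : SpFn A | ∀ Q ∈ l, χ'.1 Q ≠ 0} := by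
  induction l with
  | nil =>
    have : {χ' : SpFn A | ∀ Q ∈ ([] : List A), χ'.1 Q ≠ 0} = Set.univ := by
      ext χ'; simp
    rw [this]; exact isOpen_univ
  | cons Q l ih =>
    have heq : {χ' : SpFn A | ∀ Q' ∈ Q :: l, χ'.1 Q' ≠ 0} =
        {χ' : SpFn A | χ'.1 Q ≠ 0} ∩ {χ' : SpFn A | ∀ Q' ∈ l, χ'.1 Q' ≠ 0} := by
      ext χ'; simp
    rw [heq]
    have hmem : {χ' : SpFn A | χ'.1 Q ≠ 0} ∈
        {U : Set (SpFn A) | ∃ Y : A, U = {χ : SpFn A | χ.1 Y ≠ 0}} := ⟨Q, rfl⟩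
    exact (TopologicalSpace.isOpen_generateFrom_of_mem hmem).inter ih

end Aux

/-- STATEMENT 16: For every object `X` and every `n ≥ 0`, the set
`U_{X,n} = {χ ∈ Sp A | χ X ≤ n}` is closed in the Ziegler topology. -/
theorem isClosed_le_setOf_additiveFn {A : Type u} [Category.{v} A] [EssentiallySmall.{v} A] [Abelian A]
    (X : A) (n : ℕ) :
    IsClosed {χ : SpFn A | χ.1 X ≤ n} := by
  rw [← isOpen_compl_iff]
  rw [isOpen_iff_forall_mem_open]
  rintro χ hχmem
  have hadd : IsAdditiveFn χ.1 := χ.2.1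
  have hirr : IsIrreducibleAdd χ.1 := χ.2.2
  have hX : n < χ.1 X := by simpa using hχmem
  obtain ⟨Qs, hQs, hc⟩ := Lfun_spec hadd X
  have hcn : n < Qs.countP (fun Q => χ.1 Q != 0) := by
    rw [hc, ← eq_Lfun hadd hirr X]; exact hX
  refine ⟨{χ' : SpFn A | ∀ Q ∈ Qs.filter (fun Q => χ.1 Q != 0), χ'.1 Q ≠ 0}, ?_, ?_, ?_⟩
  · intro χ' hχ'
    simp only [Set.mem_compl_iff, Set.mem_setOf_eq, not_le]
    have hsum : χ'.1 X = (Qs.map χ'.1).sum := HasFilt.sum χ'.2.1 Qs X hQs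
    have hbound : Qs.countP (fun Q => χ.1 Q != 0) ≤ (Qs.map χ'.1).sum := by
      apply count_le_sum'
      intro Q hQ hQne
      exact hχ' Q (List.mem_filter.2 ⟨hQ, by simpa [bne_iff_ne] using hQne⟩)
    omega
  · exact isOpen_listInter _
  · intro Q hQ
    have := (List.mem_filter.1 hQ).2
    simpa [bne_iff_ne] using this
end

section
/- Let A be a ring without invariant basis number such that A^m ≅ A^n as A-modules for some m ≠ n. Then every A-module of finite endolength (i.e., of finite length over its endomorphism ring) is zero, and consequently every endofinite cohomological functor H : D^b(proj A)^op → Ab is zero. -/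
open CategoryTheory CategoryTheory.Limits CategoryTheory.Pretriangulated Opposite

universe v u

variable {C : Type u} [Category.{v} C] [HasZeroObject C] [HasShift C ℤ] [Preadditive C]
  [∀ n : ℤ, (CategoryTheory.shiftFunctor C n).Additive] [Pretriangulated C]

/-- The ℤ-indexed long sequence `⋯ → Σ⁻¹C → A → B → C → ΣA → ΣB → ⋯` induced by a
triangle `A → B → C`; the object in position `i` is `Σ^{i/3}` applied to `A`, `B`
or `C` according to `i mod 3`. -/
noncomputable def triSeq (T : Triangle C) (i : ℤ) : C :=
  if i % 3 = 0 then T.obj₁⟦i / 3⟧ else if i % 3 = 1 then T.obj₂⟦i / 3⟧ else T.obj₃⟦i / 3⟧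

/-- A function `χ : Ob C → ℕ` is *cohomological* if (1) it is additive on direct
sums, (2) on each object some suspension of it vanishes, and (3) for every exact
triangle and every labelling `X₀, X₁, X₂, …` of the induced long sequence with
`χ X₀ = 0`, the alternating sums `∑_{i=0}^n (-1)^{i+n} χ(X_i)` are nonnegative,
with equality whenever `χ X_n = 0`. -/
def IsCohFn [HasBinaryBiproducts C] (χ : C → ℕ) : Prop :=
  (∀ X Y : C, χ (X ⊞ Y) = χ X + χ Y) ∧
  (∀ X : C, ∃ n : ℤ, χ (X⟦n⟧) = 0) ∧
  (∀ T : Triangle C, T ∈ (distTriang C) → ∀ d : ℤ, χ (triSeq T d) = 0 →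
    ∀ n : ℕ, (0 ≤ ∑ i ∈ Finset.range (n + 1), (-1 : ℤ) ^ (i + n) * χ (triSeq T (d + i))) ∧
      (χ (triSeq T (d + n)) = 0 →
        ∑ i ∈ Finset.range (n + 1), (-1 : ℤ) ^ (i + n) * χ (triSeq T (d + i)) = 0))

/-- A cohomological function is *irreducible* if it is nonzero and cannot be
written as the sum of two nonzero cohomological functions. -/
def IsIrreducibleCohFn [HasBinaryBiproducts C] (χ : C → ℕ) : Prop :=
  (∃ X : C, χ X ≠ 0) ∧
    ∀ φ ψ : C → ℕ, IsCohFn φ → IsCohFn ψ → (∀ X : C, χ X = φ X + ψ X) →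
      (∀ X : C, φ X = 0) ∨ (∀ X : C, ψ X = 0)

/-- A functor `H : Cᵒᵖ ⥤ Ab` is cohomological if it is additive and sends exact
triangles to exact sequences of abelian groups. -/
def IsCohFunctor (H : Cᵒᵖ ⥤ AddCommGrpCat.{v}) : Prop :=
  H.Additive ∧ ∀ T : Triangle C, T ∈ (distTriang C) →
    Function.Exact (H.map T.mor₂.op) (H.map T.mor₁.op)

/-- The action of the endomorphism ring `End H` of a functor `H : Cᵒᵖ ⥤ Ab` on
each of its values. -/
instance endSMul (H : Cᵒᵖ ⥤ AddCommGrpCat.{v}) (X : Cᵒᵖ) : SMul (End H) (H.obj X) :=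
  ⟨fun α x => α.app X x⟩

/-- Each value `H X` is a module over the endomorphism ring `End H`. -/
instance endModule (H : Cᵒᵖ ⥤ AddCommGrpCat.{v}) (X : Cᵒᵖ) : Module (End H) (H.obj X) where
  one_smul _ := rfl
  mul_smul _ _ _ := rfl
  smul_zero _ := map_zero _
  smul_add _ _ _ := map_add _ _ _
  add_smul _ _ _ := AddMonoidHom.add_apply _ _ _
  zero_smul _ := AddMonoidHom.zero_apply _

/-- The length of a module, defined as the Krull dimension of its lattice of
submodules (a natural number; `0` by convention if this is infinite). -/
noncomputable def moduleLength (R : Type*) [Ring R] (M : Type*) [AddCommGroup M]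
    [Module R M] : ℕ :=
  (WithBot.unbotD 0 (Order.krullDim (Submodule R M))).toNat

/-- A cohomological functor `H : Cᵒᵖ ⥤ Ab` is *endofinite* if each value `H X`
has finite length over `End H` and each object has a suspension killed by `H`. -/
def IsEndofiniteCohFunctor (H : Cᵒᵖ ⥤ AddCommGrpCat.{v}) : Prop :=
  IsCohFunctor H ∧ (∀ X : C, IsFiniteLength (End H) (H.obj (op X))) ∧
    ∀ X : C, ∃ n : ℤ, IsZero (H.obj (op (X⟦n⟧)))

/-- A functor is indecomposable if it is nonzero and is not a direct sum of two
nonzero cohomological functors. -/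
def IsIndecCohFunctor (H : Cᵒᵖ ⥤ AddCommGrpCat.{v}) : Prop :=
  ¬ IsZero H ∧ ¬ ∃ G G' : Cᵒᵖ ⥤ AddCommGrpCat.{v}, IsCohFunctor G ∧ IsCohFunctor G' ∧
    ¬ IsZero G ∧ ¬ IsZero G' ∧ Nonempty (H ≅ G ⊞ G')

/-- The cohomological function induced by an endofinite cohomological functor:
`χ_H X` is the length of `H X` over `End H`. -/
noncomputable def chiH (H : Cᵒᵖ ⥤ AddCommGrpCat.{v}) (X : C) : ℕ :=
  moduleLength (End H) (H.obj (op X))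

/-- A *thick subcategory* of a triangulated category: a class of objects
containing the zero objects, closed under isomorphisms, shifts, extensions
(triangles) and direct summands. -/
structure IsThickClass (C : Type u) [Category.{v} C] [HasZeroObject C] [HasShift C ℤ]
    [Preadditive C] [∀ n : ℤ, (CategoryTheory.shiftFunctor C n).Additive] [Pretriangulated C]
    [HasBinaryBiproducts C] (P : C → Prop) : Prop where
  zero : ∀ X : C, IsZero X → P X
  iso : ∀ {X Y : C}, (X ≅ Y) → P X → P Y
  shift : ∀ (X : C) (n : ℤ), P X → P (X⟦n⟧)
  ext : ∀ T : Triangle C, T ∈ (distTriang C) → P T.obj₁ → P T.obj₂ → P T.obj₃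
  summand : ∀ X Y : C, P (X ⊞ Y) → P X

section KeyAlgebra

variable {R A M : Type*} [Ring R] [Ring A] [AddCommGroup M] [Module R M]

/-- An object of `AddCommGrpCat` that is zero has subsingleton carrier. -/
theorem subsingleton_of_isZero {X : AddCommGrpCat} (h : IsZero X) : Subsingleton X := by
  refine subsingleton_of_forall_eq 0 fun x => ?_
  rw [IsZero.iff_id_eq_zero] at h
  have : (𝟙 X) x = (0 : X ⟶ X) x := by rw [h]
  simpa using this

theorem aux_subsingleton_of_piEquiv {m n : ℕ} [IsArtinian R M] (hmn : m < n)
    (E : (Fin m → M) ≃ₗ[R] (Fin n → M)) : Subsingleton M := by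
  classical
  let incl : (Fin m → M) →ₗ[R] (Fin n → M) :=
    { toFun := fun v j => if h : (j : ℕ) < m then v ⟨j, h⟩ else 0
      map_add' := by intro v w; funext j; dsimp; split <;> simp
      map_smul' := by intro c v; funext j; dsimp; split <;> simp }
  let g : (Fin n → M) →ₗ[R] (Fin n → M) := incl ∘ₗ (E.symm : (Fin n → M) →ₗ[R] (Fin m → M))
  have hincl : Function.Injective incl := by
    intro v w h
    funext i
    have := congrFun h ⟨i, i.2.trans hmn⟩
    simpa [incl, i.2] using this
  have hginj : Function.Injective g := hincl.comp E.symm.injective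
  have hgsurj := IsArtinian.surjective_of_injective_endomorphism g hginj
  refine subsingleton_of_forall_eq 0 fun x => ?_
  obtain ⟨v, hv⟩ := hgsurj (Pi.single ⟨m, hmn⟩ x)
  have := congrFun hv ⟨m, hmn⟩
  simpa [g, incl] using this.symm

end KeyAlgebra
open CategoryTheory

section Lmap
variable {R A M : Type*} [Ring R] [Ring A] [AddCommGroup M] [Module R M]

/-- The `R`-linear map between finite powers of `M` given by a matrix of
coefficients in `A` acting through `T`. -/
def Lmap (T : A →+ (M →ₗ[R] M)) {p q : ℕ} (c : Fin p → Fin q → A) :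
    (Fin q → M) →ₗ[R] (Fin p → M) where
  toFun v i := ∑ j, T (c i j) (v j)
  map_add' v w := by funext i; simp [Finset.sum_add_distrib]
  map_smul' r v := by funext i; simp [Finset.smul_sum]

theorem Lmap_apply (T : A →+ (M →ₗ[R] M)) {p q : ℕ} (c : Fin p → Fin q → A)
    (v : Fin q → M) (i : Fin p) : Lmap T c v i = ∑ j, T (c i j) (v j) := rfl

theorem Lmap_comp_left (T : A →+ (M →ₗ[R] M)) (hmul : ∀ a b, T (a * b) = T a ∘ₗ T b)
    {p q r : ℕ} (c : Fin p → Fin q → A) (d : Fin q → Fin r → A) :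
    (Lmap T c) ∘ₗ (Lmap T d) = Lmap T (fun i k => ∑ j, c i j * d j k) := by
  refine LinearMap.ext fun v => funext fun i => ?_
  rw [LinearMap.comp_apply, Lmap_apply, Lmap_apply]
  calc ∑ j, T (c i j) (Lmap T d v j)
      = ∑ j, ∑ k, T (c i j) (T (d j k) (v k)) := by
        refine Finset.sum_congr rfl fun j _ => ?_
        rw [Lmap_apply, map_sum]
    _ = ∑ k, ∑ j, T (c i j * d j k) (v k) := by
        rw [Finset.sum_comm]
        refine Finset.sum_congr rfl fun k _ => Finset.sum_congr rfl fun j _ => ?_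
        rw [hmul]; rfl
    _ = ∑ k, T (∑ j, c i j * d j k) (v k) := by
        refine Finset.sum_congr rfl fun k _ => ?_
        rw [map_sum, LinearMap.coe_sum, Finset.sum_apply]

theorem Lmap_comp_right (T : A →+ (M →ₗ[R] M)) (hmul : ∀ a b, T (a * b) = T b ∘ₗ T a)
    {p q r : ℕ} (c : Fin p → Fin q → A) (d : Fin q → Fin r → A) :
    (Lmap T c) ∘ₗ (Lmap T d) = Lmap T (fun i k => ∑ j, d j k * c i j) := by
  refine LinearMap.ext fun v => funext fun i => ?_
  rw [LinearMap.comp_apply, Lmap_apply, Lmap_apply]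
  calc ∑ j, T (c i j) (Lmap T d v j)
      = ∑ j, ∑ k, T (c i j) (T (d j k) (v k)) := by
        refine Finset.sum_congr rfl fun j _ => ?_
        rw [Lmap_apply, map_sum]
    _ = ∑ k, ∑ j, T (d j k * c i j) (v k) := by
        rw [Finset.sum_comm]
        refine Finset.sum_congr rfl fun k _ => Finset.sum_congr rfl fun j _ => ?_
        rw [hmul]; rfl
    _ = ∑ k, T (∑ j, d j k * c i j) (v k) := by
        refine Finset.sum_congr rfl fun k _ => ?_
        rw [map_sum, LinearMap.coe_sum, Finset.sum_apply]

theorem Lmap_single (T : A →+ (M →ₗ[R] M)) (hT1 : T 1 = LinearMap.id) {p : ℕ} :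
    Lmap T (fun i j : Fin p => (Pi.single i 1 : Fin p → A) j) = LinearMap.id := by
  classical
  refine LinearMap.ext fun v => funext fun i => ?_
  rw [Lmap_apply]
  have h : ∀ j, T ((Pi.single i (1 : A) : Fin p → A) j) (v j) = if j = i then v j else 0 := by
    intro j
    rcases eq_or_ne j i with h | h
    · subst h; rw [Pi.single_eq_same, hT1]; simp
    · rw [Pi.single_eq_of_ne h]; simp [h]
  rw [Finset.sum_congr rfl fun j _ => h j]
  simp

theorem aux_expand {m n : ℕ} (f : (Fin m → A) →ₗ[A] (Fin n → A)) (x : Fin m → A) (j : Fin n) :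
    f x j = ∑ i, x i * f (Pi.single i 1) j := by
  classical
  conv_lhs => rw [← Finset.univ_sum_single x]
  rw [map_sum, Finset.sum_apply]
  refine Finset.sum_congr rfl fun i _ => ?_
  have hsingle : (Pi.single i (x i) : Fin m → A) = x i • (Pi.single i (1:A) : Fin m → A) := by
    funext l
    rcases eq_or_ne l i with h | h
    · subst h; simp
    · simp [Pi.single_eq_of_ne h]
  rw [hsingle, map_smul, Pi.smul_apply, smul_eq_mul]

end Lmap

section Key
variable {R A M : Type*} [Ring R] [Ring A] [AddCommGroup M] [Module R M]

theorem single_swap {p : ℕ} (i l : Fin p) : (Pi.single l (1:A) : Fin p → A) i = (Pi.single i (1:A) : Fin p → A) l := by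
  rcases eq_or_ne i l with h | h
  · subst h; rfl
  · rw [Pi.single_eq_of_ne h, Pi.single_eq_of_ne h.symm]

theorem key_subsingleton [IsArtinian R M] (T : A →+ (M →ₗ[R] M))
    (hT1 : T 1 = LinearMap.id)
    (hmul : (∀ a b, T (a * b) = T a ∘ₗ T b) ∨ (∀ a b, T (a * b) = T b ∘ₗ T a))
    {m n : ℕ} (hmn : m ≠ n) (e : (Fin m → A) ≃ₗ[A] (Fin n → A)) :
    Subsingleton M := by
  classical
  have id1 : ∀ (k j : Fin n),
      ∑ i, e.symm (Pi.single k 1) i * e (Pi.single i 1) j = (Pi.single k (1:A) : Fin n → A) j := by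
    intro k j
    have h := aux_expand e.toLinearMap (e.symm (Pi.single k 1)) j
    simp only [LinearEquiv.coe_coe] at h
    rw [← h, e.apply_symm_apply]
  have id2 : ∀ (l i : Fin m),
      ∑ j, e (Pi.single l 1) j * e.symm (Pi.single j 1) i = (Pi.single l (1:A) : Fin m → A) i := by
    intro l i
    have h := aux_expand e.symm.toLinearMap (e (Pi.single l 1)) i
    simp only [LinearEquiv.coe_coe] at h
    rw [← h, e.symm_apply_apply]
  have hE : Nonempty ((Fin m → M) ≃ₗ[R] (Fin n → M)) := by
    rcases hmul with hmul | hmul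
    · -- left convention
      let F : (Fin n → M) →ₗ[R] (Fin m → M) :=
        Lmap T (fun (i : Fin m) (j : Fin n) => e (Pi.single i 1) j)
      let F' : (Fin m → M) →ₗ[R] (Fin n → M) :=
        Lmap T (fun (k : Fin n) (i : Fin m) => e.symm (Pi.single k 1) i)
      refine ⟨LinearEquiv.ofLinear F' F ?_ ?_⟩
      · -- F' ∘ F = id on Fin n → M
        rw [Lmap_comp_left T hmul]
        have : (fun (k j : Fin n) => ∑ i, e.symm (Pi.single k 1) i * e (Pi.single i 1) j)
            = fun (k j : Fin n) => (Pi.single k (1:A) : Fin n → A) j := by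
          funext k j; exact id1 k j
        rw [this, Lmap_single T hT1]
      · -- F ∘ F' = id on Fin m → M
        rw [Lmap_comp_left T hmul]
        have : (fun (i l : Fin m) => ∑ j, e (Pi.single i 1) j * e.symm (Pi.single j 1) l)
            = fun (i l : Fin m) => (Pi.single i (1:A) : Fin m → A) l := by
          funext i l; exact id2 i l
        rw [this, Lmap_single T hT1]
    · -- right convention
      let F : (Fin n → M) →ₗ[R] (Fin m → M) :=
        Lmap T (fun (i : Fin m) (j : Fin n) => e.symm (Pi.single j 1) i)
      let F' : (Fin m → M) →ₗ[R] (Fin n → M) :=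
        Lmap T (fun (j : Fin n) (i : Fin m) => e (Pi.single i 1) j)
      refine ⟨LinearEquiv.ofLinear F' F ?_ ?_⟩
      · -- F' ∘ F = id on Fin n → M
        rw [Lmap_comp_right T hmul]
        have : (fun (j k : Fin n) => ∑ i, e.symm (Pi.single k 1) i * e (Pi.single i 1) j)
            = fun (j k : Fin n) => (Pi.single j (1:A) : Fin n → A) k := by
          funext j k; rw [id1 k j]; exact single_swap j k
        rw [this, Lmap_single T hT1]
      · -- F ∘ F' = id on Fin m → M
        rw [Lmap_comp_right T hmul]
        have : (fun (i l : Fin m) => ∑ j, e (Pi.single l 1) j * e.symm (Pi.single j 1) i)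
            = fun (i l : Fin m) => (Pi.single i (1:A) : Fin m → A) l := by
          funext i l; rw [id2 l i]; exact single_swap i l
        rw [this, Lmap_single T hT1]
  obtain ⟨E⟩ := hE
  rcases hmn.lt_or_gt with h | h
  · exact aux_subsingleton_of_piEquiv h E
  · exact aux_subsingleton_of_piEquiv h E.symm
end Key

section MainAux
variable {A : Type v} [Ring A]

theorem part1_aux {m n : ℕ} (hmn : m ≠ n) (e : (Fin m → A) ≃ₗ[A] (Fin n → A))
    (M : Type w) [AddCommGroup M] [Module A M]
    (hfl : IsFiniteLength (Module.End A M) M) : Subsingleton M := by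
  haveI : IsArtinian (Module.End A M) M :=
    (isFiniteLength_iff_isNoetherian_isArtinian.mp hfl).2
  refine key_subsingleton (R := Module.End A M)
    { toFun := fun a =>
        { toFun := fun x => a • x
          map_add' := fun x y => smul_add a x y
          map_smul' := fun α x => by
            show a • α x = α (a • x)
            exact (map_smul α a x).symm }
      map_zero' := by ext x; exact zero_smul A x
      map_add' := fun a b => by ext x; exact add_smul a b x }
    ?_ (Or.inl ?_) hmn e
  · ext x; exact one_smul A x
  · intro a b; ext x; exact mul_smul a b x

end MainAux

/-- STATEMENT 18: Let `A` be a ring without invariant basis number, say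
`A^m ≅ A^n` as `A`-modules with `m ≠ n`.  Then every `A`-module of finite
endolength is zero; consequently every endofinite cohomological functor
`H : D^b(proj A)ᵒᵖ ⥤ Ab` is zero.  (The category of perfect complexes is
presented abstractly: a triangulated category `C` generated, as a thick
subcategory, by an object `G` with endomorphism ring `A`; for `C = D^b(proj A)`
take `G = A`.) -/


theorem no_endofinite_over_ring_without_IBN
    {A : Type v} [Ring A] (m n : ℕ) (hmn : m ≠ n)
    (e : (Fin m → A) ≃ₗ[A] (Fin n → A)) :
    (∀ (M : Type w) [AddCommGroup M] [Module A M],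
        IsFiniteLength (Module.End A M) M → Subsingleton M) ∧
    (∀ (C : Type u) [Category.{v} C] [HasZeroObject C] [HasShift C ℤ]
        [Preadditive C] [∀ k : ℤ, (CategoryTheory.shiftFunctor C k).Additive]
        [Pretriangulated C] [HasBinaryBiproducts C],
        ∀ (G : C) (_ : A ≃+* End G)
        (_ : ∀ P : C → Prop, IsThickClass C P → P G → ∀ X : C, P X)
        (H : Cᵒᵖ ⥤ AddCommGrpCat.{v}), IsEndofiniteCohFunctor H →
          ∀ X : C, IsZero (H.obj (op X))) := by
  constructor
  · intro M _ _ hfl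
    exact part1_aux hmn e M hfl
  · intro C iC iZ iS iP iA iT iB G eA hgen H hH
    obtain ⟨⟨hAdd, hExact⟩, hLen, -⟩ := hH
    haveI := hAdd
    -- Step A: `H` kills every shift of the generator `G`.
    have hG : ∀ k : ℤ, IsZero (H.obj (op (G⟦k⟧))) := by
      intro k
      let φ : A → CategoryTheory.End (G⟦k⟧) := fun a => (shiftFunctor C k).map (eA a)
      have hφ0 : φ 0 = 0 := by simp [φ, map_zero]
      have hφadd : ∀ a b, φ (a + b) = φ a + φ b := by
        intro a b
        show (shiftFunctor C k).map (eA (a + b)) = _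
        rw [map_add]
        exact (shiftFunctor C k).map_add
      have hφ1 : φ 1 = 𝟙 (G⟦k⟧) := by
        have : eA 1 = 𝟙 G := map_one eA
        simp [φ, this]
      have hφmul : ∀ a b, φ (a * b) = φ b ≫ φ a := by
        intro a b
        have : eA (a * b) = eA b ≫ eA a := map_mul eA a b
        simp [φ, this]
      let T : A →+ ((H.obj (op (G⟦k⟧))) →ₗ[End H] (H.obj (op (G⟦k⟧)))) :=
        { toFun := fun a =>
            { toFun := fun x => H.map ((φ a).op) x
              map_add' := fun x y => map_add _ x y
              map_smul' := fun α x => by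
                show H.map ((φ a).op) (α.app (op (G⟦k⟧)) x)
                    = α.app (op (G⟦k⟧)) (H.map ((φ a).op) x)
                exact (congrArg (fun (f : H.obj (op (G⟦k⟧)) ⟶ H.obj (op (G⟦k⟧))) => f x)
                  (α.naturality ((φ a).op))).symm }
          map_zero' := by
            ext x
            show H.map ((φ 0).op) x = 0
            rw [hφ0, op_zero, Functor.map_zero]
            rfl
          map_add' := fun a b => by
            ext x
            show H.map ((φ (a + b)).op) x = H.map ((φ a).op) x + H.map ((φ b).op) x
            rw [hφadd, op_add, Functor.map_add]
            rfl }
      have hT1 : T 1 = LinearMap.id := by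
        ext x
        show H.map ((φ 1).op) x = x
        rw [hφ1, op_id, H.map_id]
        rfl
      have hTmul : ∀ a b, T (a * b) = T b ∘ₗ T a := by
        intro a b
        ext x
        show H.map ((φ (a * b)).op) x = H.map ((φ b).op) (H.map ((φ a).op) x)
        rw [hφmul, op_comp, Functor.map_comp]
        rfl
      haveI : IsArtinian (End H) (H.obj (op (G⟦k⟧))) :=
        (isFiniteLength_iff_isNoetherian_isArtinian.mp (hLen (G⟦k⟧))).2
      haveI hsub : Subsingleton (H.obj (op (G⟦k⟧))) :=
        key_subsingleton T hT1 (Or.inr hTmul) hmn e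
      exact AddCommGrpCat.isZero_of_subsingleton _
    -- helper: vanishing on an iterated shift from vanishing on the added shift
    have hshift2 : ∀ (Y : C) (a b : ℤ), IsZero (H.obj (op (Y⟦a + b⟧))) →
        IsZero (H.obj (op ((Y⟦a⟧)⟦b⟧))) := fun Y a b h =>
      h.of_iso (H.mapIso ((shiftFunctorAdd C a b).app Y).op)
    -- Step B: the class of objects all of whose shifts are killed by `H` is thick.
    have hthick : IsThickClass C (fun X => ∀ k : ℤ, IsZero (H.obj (op (X⟦k⟧)))) := by
      constructor
      · intro X hX k
        have h1 : IsZero ((shiftFunctor C k).obj X) := (shiftFunctor C k).map_isZero hX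
        have h2 : IsZero (op (X⟦k⟧)) := by
          rw [IsZero.iff_id_eq_zero] at h1 ⊢
          rw [show 𝟙 (op (X⟦k⟧)) = (𝟙 (X⟦k⟧)).op from rfl, h1, op_zero]
        exact H.map_isZero h2
      · intro X Y i hX k
        exact (hX k).of_iso (H.mapIso ((shiftFunctor C k).mapIso i).op)
      · intro X n hX k
        exact hshift2 X n k (hX (n + k))
      · intro T hT hP1 hP2 k
        have hTr := Pretriangulated.rot_of_distTriang _
          (Pretriangulated.Triangle.shift_distinguished T hT k)
        have hE := hExact _ hTr
        have h3 : IsZero (H.obj (op (((shiftFunctor (Triangle C) k).obj T).rotate.obj₃))) :=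
          hshift2 T.obj₁ k 1 (hP1 (k + 1))
        have h1' : IsZero (H.obj (op (((shiftFunctor (Triangle C) k).obj T).rotate.obj₁))) :=
          hP2 k
        haveI hs3 := subsingleton_of_isZero h3
        haveI hs1 := subsingleton_of_isZero h1'
        haveI : Subsingleton (H.obj (op (((shiftFunctor (Triangle C) k).obj T).rotate.obj₂))) := by
          refine subsingleton_of_forall_eq 0 fun y => ?_
          obtain ⟨x, hx⟩ := (hE y).mp (Subsingleton.elim _ _)
          rw [← hx, Subsingleton.elim x 0, map_zero]
        exact AddCommGrpCat.isZero_of_subsingleton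
          (H.obj (op (((shiftFunctor (Triangle C) k).obj T).rotate.obj₂)))
      · intro X Y hXY k
        rw [IsZero.iff_id_eq_zero]
        have hfact : (shiftFunctor C k).map (biprod.inl : X ⟶ X ⊞ Y) ≫
            (shiftFunctor C k).map (biprod.fst : X ⊞ Y ⟶ X) = 𝟙 (X⟦k⟧) := by
          rw [← Functor.map_comp, biprod.inl_fst, CategoryTheory.Functor.map_id]
        have hfac2 : 𝟙 (H.obj (op (X⟦k⟧))) =
            H.map ((shiftFunctor C k).map (biprod.fst : X ⊞ Y ⟶ X)).op ≫
              H.map ((shiftFunctor C k).map (biprod.inl : X ⟶ X ⊞ Y)).op := by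
          rw [← H.map_comp, ← op_comp, hfact, op_id, H.map_id]
        have h0 : H.map ((shiftFunctor C k).map (biprod.fst : X ⊞ Y ⟶ X)).op = 0 :=
          (hXY k).eq_of_tgt _ _
        rw [hfac2, h0, zero_comp]
    -- conclude
    intro X
    have hPX := hgen _ hthick hG X
    exact (hPX 0).of_iso (H.mapIso ((shiftFunctorZero C ℤ).app X).op)
end
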